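/- arXiv:1405.1576 — 6 statements merged into one kernel-verified Lean document; each statement's English description precedes it below -/
import Mathlib

section
/- For every ε > 0 there exists N such that every tournament T on n ≥ N vertices satisfies c4(T) ≥ 18·c3(T)²/(1 + 8·c3(T)) − ε, where c3(T) is the fraction of 3-element vertex subsets spanning a cyclic triangle and c4(T) is the fraction of 4-element vertex subsets whose induced subtournament contains a directed 4-cycle. -/
open Finset

/-- A tournament on `Fin n`: an orientation of the complete graph, i.e. no loops and
for all distinct `x, y` exactly one of `r x y`, `r y x` holds. -/
def IsTournament {n : ℕ} (r : Fin n → Fin n → Prop) : Prop :=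
  (∀ x, ¬ r x x) ∧ ∀ x y : Fin n, x ≠ y → ((r x y ∧ ¬ r y x) ∨ (r y x ∧ ¬ r x y))

/-- `s` spans a cyclic triangle: `s = {x,y,z}` with `x→y→z→x`. -/
def IsCyclicTriple {n : ℕ} (r : Fin n → Fin n → Prop) (s : Finset (Fin n)) : Prop :=
  ∃ x y z : Fin n, x ≠ y ∧ y ≠ z ∧ x ≠ z ∧ s = {x, y, z} ∧ r x y ∧ r y z ∧ r z x

/-- `s` spans a transitive triple. -/
def IsTransTriple {n : ℕ} (r : Fin n → Fin n → Prop) (s : Finset (Fin n)) : Prop :=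
  ∃ x y z : Fin n, x ≠ y ∧ y ≠ z ∧ x ≠ z ∧ s = {x, y, z} ∧ r x y ∧ r y z ∧ r x z

/-- `s` contains a directed 4-cycle through all of its (four) elements. -/
def HasCycle4 {n : ℕ} (r : Fin n → Fin n → Prop) (s : Finset (Fin n)) : Prop :=
  ∃ a b c d : Fin n, a ≠ b ∧ a ≠ c ∧ a ≠ d ∧ b ≠ c ∧ b ≠ d ∧ c ≠ d ∧
    s = {a, b, c, d} ∧ r a b ∧ r b c ∧ r c d ∧ r d a

/-- `s` spans a transitive 4-vertex subtournament. -/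
def IsTrans4 {n : ℕ} (r : Fin n → Fin n → Prop) (s : Finset (Fin n)) : Prop :=
  ∃ a b c d : Fin n, a ≠ b ∧ a ≠ c ∧ a ≠ d ∧ b ≠ c ∧ b ≠ d ∧ c ≠ d ∧
    s = {a, b, c, d} ∧ r a b ∧ r a c ∧ r a d ∧ r b c ∧ r b d ∧ r c d

open Classical in
/-- `C3(T)`: number of 3-element vertex subsets spanning a cyclic triangle. -/
noncomputable def cyc3Count {n : ℕ} (r : Fin n → Fin n → Prop) : ℕ :=
  ((univ.powersetCard 3).filter (fun s => IsCyclicTriple r s)).card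

open Classical in
/-- `T3(T)`: number of 3-element vertex subsets spanning a transitive triple. -/
noncomputable def trans3Count {n : ℕ} (r : Fin n → Fin n → Prop) : ℕ :=
  ((univ.powersetCard 3).filter (fun s => IsTransTriple r s)).card

open Classical in
/-- `C4(T)`: number of 4-element vertex subsets containing a directed 4-cycle. -/
noncomputable def cyc4Count {n : ℕ} (r : Fin n → Fin n → Prop) : ℕ :=
  ((univ.powersetCard 4).filter (fun s => HasCycle4 r s)).card

open Classical in
/-- `T4(T)`: number of 4-element vertex subsets spanning a transitive subtournament. -/
noncomputable def trans4Count {n : ℕ} (r : Fin n → Fin n → Prop) : ℕ :=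
  ((univ.powersetCard 4).filter (fun s => IsTrans4 r s)).card


open Finset

namespace St9

/-! ### Model-level (finite, decidable) tournament machinery -/

def modSet (k : ℕ) (L : List (Fin k × Fin k)) (m : Fin k → Fin k → Bool) :
    Finset (Fin k → Fin k) :=
  univ.filter (fun σ => Function.Injective σ ∧ ∀ p ∈ L, m (σ p.1) (σ p.2) = true)

def mk4 (e01 e02 e03 e12 e13 e23 : Bool) : Fin 4 → Fin 4 → Bool :=
  ![![false, e01, e02, e03], ![!e01, false, e12, e13], ![!e02, !e12, false, e23],
    ![!e03, !e13, !e23, false]]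

def mk3 (e01 e02 e12 : Bool) : Fin 3 → Fin 3 → Bool :=
  ![![false, e01, e02], ![!e01, false, e12], ![!e02, !e12, false]]

def Lc3 : List (Fin 3 × Fin 3) := [(0,1),(1,2),(2,0)]
def Lt3 : List (Fin 3 × Fin 3) := [(0,1),(1,2),(0,2)]
def Lc4 : List (Fin 4 × Fin 4) := [(0,1),(1,2),(2,3),(3,0)]
def Lt4 : List (Fin 4 × Fin 4) := [(0,1),(0,2),(0,3),(1,2),(1,3),(2,3)]
def LP1 : List (Fin 4 × Fin 4) := [(0,1),(1,2),(2,0),(1,3),(3,0)]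
def LP2 : List (Fin 4 × Fin 4) := [(0,1),(1,2),(2,0),(0,3),(3,1)]
def LP3 : List (Fin 4 × Fin 4) := [(0,1),(0,2),(2,1),(0,3),(3,1)]
def Lz  : List (Fin 4 × Fin 4) := [(0,1),(1,2),(2,0)]

set_option maxHeartbeats 4000000 in
theorem model3 : ∀ e01 e02 e12 : Bool, (fun m =>
    ((modSet 3 Lc3 m).card = (if (modSet 3 Lc3 m) = ∅ then 0 else 3)) ∧
    ((modSet 3 Lt3 m).card = (if (modSet 3 Lt3 m) = ∅ then 0 else 1)) ∧
    ((if (modSet 3 Lc3 m) = ∅ then 0 else 1) + (if (modSet 3 Lt3 m) = ∅ then 0 else 1) = 1))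
    (mk3 e01 e02 e12) := by decide

set_option maxHeartbeats 16000000 in
theorem model4 : ∀ e01 e02 e03 e12 e13 e23 : Bool, (fun m =>
    ((modSet 4 LP1 m).card = (if (modSet 4 Lc4 m) = ∅ then 0 else 2)) ∧
    ((modSet 4 LP2 m).card = (if (modSet 4 Lc4 m) = ∅ then 0 else 2)) ∧
    ((modSet 4 LP3 m).card = (if (modSet 4 Lt4 m) = ∅ then 0 else 2)) ∧
    ((modSet 4 Lc4 m).card = (if (modSet 4 Lc4 m) = ∅ then 0 else 4)) ∧
    ((modSet 4 Lt4 m).card = (if (modSet 4 Lt4 m) = ∅ then 0 else 1)) ∧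
    ((modSet 4 Lz m).card + 3 * (if (modSet 4 Lt4 m) = ∅ then 0 else 1) =
      3 + 3 * (if (modSet 4 Lc4 m) = ∅ then 0 else 1)))
    (mk4 e01 e02 e03 e12 e13 e23) := by decide

/-! ### Tuple sets in the ambient tournament -/

variable {n : ℕ}

open Classical in
noncomputable def tupSet (r : Fin n → Fin n → Prop) (k : ℕ) (L : List (Fin k × Fin k)) :
    Finset (Fin k → Fin n) :=
  univ.filter (fun u => Function.Injective u ∧ ∀ p ∈ L, r (u p.1) (u p.2))

lemma mem_tupSet {r : Fin n → Fin n → Prop} {k : ℕ} {L : List (Fin k × Fin k)}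
    {u : Fin k → Fin n} :
    u ∈ tupSet r k L ↔ Function.Injective u ∧ ∀ p ∈ L, r (u p.1) (u p.2) := by
  classical
  simp [tupSet]

open Classical in
noncomputable def mat (r : Fin n → Fin n → Prop) (f : Fin k → Fin n) :
    Fin k → Fin k → Bool := fun i j => decide (r (f i) (f j))

lemma fiber_card_eq_model (r : Fin n → Fin n → Prop) (k : ℕ) (L : List (Fin k × Fin k))
    (f : Fin k → Fin n) (hf : Function.Injective f) :
    ((tupSet r k L).filter (fun u => image u univ = image f univ)).card
      = (modSet k L (mat r f)).card := by
  classical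
  symm
  apply Finset.card_bij (fun σ _ => f ∘ σ)
  · intro σ hσ
    rw [modSet, mem_filter] at hσ
    obtain ⟨-, hinj, hpat⟩ := hσ
    rw [mem_filter]
    refine ⟨mem_tupSet.2 ⟨hf.comp hinj, fun p hp => ?_⟩, ?_⟩
    · exact of_decide_eq_true (hpat p hp)
    · have hσsurj : Function.Surjective σ := (Finite.injective_iff_surjective).1 hinj
      rw [← Finset.image_image, Finset.image_univ_of_surjective hσsurj]
  · intro σ1 h1 σ2 h2 hee
    funext i
    exact hf (congrFun hee i)
  · intro u hu
    rw [mem_filter] at hu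
    obtain ⟨hu1, hu2⟩ := hu
    obtain ⟨hinj, hpat⟩ := mem_tupSet.1 hu1
    have hmem : ∀ i, u i ∈ image f univ := by
      intro i; rw [← hu2]; exact mem_image_of_mem u (mem_univ i)
    have hex : ∀ i, ∃ j, f j = u i := by
      intro i; obtain ⟨j, -, hj⟩ := mem_image.1 (hmem i); exact ⟨j, hj⟩
    choose g hg using hex
    have hginj : Function.Injective g := by
      intro i1 i2 h12
      apply hinj
      rw [← hg i1, ← hg i2, h12]
    refine ⟨g, ?_, ?_⟩
    · rw [modSet, mem_filter]
      refine ⟨mem_univ _, hginj, fun p hp => ?_⟩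
      rw [mat, hg p.1, hg p.2]
      exact decide_eq_true (hpat p hp)
    · funext i; exact hg i

lemma tup_card_eq_sum_pc (r : Fin n → Fin n → Prop) (k : ℕ) (L : List (Fin k × Fin k)) :
    (tupSet r k L).card
      = ∑ s ∈ (univ : Finset (Fin n)).powersetCard k,
          ((tupSet r k L).filter (fun u => image u univ = s)).card := by
  classical
  apply card_eq_sum_card_fiberwise
  intro u hu
  rw [Finset.mem_coe, mem_powersetCard]
  exact ⟨subset_univ _,
    by rw [card_image_of_injective _ (mem_tupSet.1 hu).1, card_univ, Fintype.card_fin]⟩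

noncomputable def enum (s : Finset (Fin n)) {k : ℕ} (h : s.card = k) : Fin k → Fin n :=
  fun i => (s.orderIsoOfFin h i : Fin n)

lemma enum_inj (s : Finset (Fin n)) {k : ℕ} (h : s.card = k) :
    Function.Injective (enum s h) := by
  intro i j hij
  exact (s.orderIsoOfFin h).injective (Subtype.ext hij)

lemma enum_image (s : Finset (Fin n)) {k : ℕ} (h : s.card = k) :
    image (enum s h) univ = s := by
  ext y
  simp only [mem_image, mem_univ, true_and]
  constructor
  · rintro ⟨i, rfl⟩; exact (s.orderIsoOfFin h i).2
  · intro hy; exact ⟨(s.orderIsoOfFin h).symm ⟨y, hy⟩, by simp [enum]⟩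

open Finset

variable {n : ℕ} {r : Fin n → Fin n → Prop}

lemma mat_diag (hr : IsTournament r) (f : Fin k → Fin n) (i : Fin k) :
    mat r f i i = false := by
  simp [mat, hr.1 (f i)]

lemma mat_skew (hr : IsTournament r) (f : Fin k → Fin n) (hf : Function.Injective f)
    {i j : Fin k} (hij : i ≠ j) : mat r f j i = !mat r f i j := by
  rcases hr.2 (f i) (f j) (fun hh => hij (hf hh)) with ⟨h1, h2⟩ | ⟨h1, h2⟩ <;>
    simp [mat, h1, h2]

lemma mat_eq_mk4 (hr : IsTournament r) (f : Fin 4 → Fin n) (hf : Function.Injective f) :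
    mat r f = mk4 (mat r f 0 1) (mat r f 0 2) (mat r f 0 3) (mat r f 1 2)
      (mat r f 1 3) (mat r f 2 3) := by
  funext i j
  fin_cases i <;> fin_cases j <;>
    simp only [mk4, Matrix.cons_val_zero, Matrix.cons_val_one, Matrix.head_cons,
      Matrix.cons_val_two, Matrix.tail_cons, Matrix.cons_val_three] <;>
    first
      | exact mat_diag hr f _
      | rfl
      | (rw [mat_skew hr f hf (by decide)]; rfl)

lemma mat_eq_mk3 (hr : IsTournament r) (f : Fin 3 → Fin n) (hf : Function.Injective f) :
    mat r f = mk3 (mat r f 0 1) (mat r f 0 2) (mat r f 1 2) := by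
  funext i j
  fin_cases i <;> fin_cases j <;>
    simp only [mk3, Matrix.cons_val_zero, Matrix.cons_val_one, Matrix.head_cons,
      Matrix.cons_val_two, Matrix.tail_cons] <;>
    first
      | exact mat_diag hr f _
      | rfl
      | (rw [mat_skew hr f hf (by decide)]; rfl)

lemma image4 (a b c d : Fin n) : Finset.image ![a,b,c,d] univ = {a,b,c,d} := by
  ext y
  simp [Fin.exists_fin_two, Fin.exists_fin_succ]
  tauto

lemma image3 (a b c : Fin n) : Finset.image ![a,b,c] univ = {a,b,c} := by
  ext y
  simp [Fin.exists_fin_two, Fin.exists_fin_succ]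
  tauto

lemma inj4 {a b c d : Fin n} (hab : a ≠ b) (hac : a ≠ c) (had : a ≠ d)
    (hbc : b ≠ c) (hbd : b ≠ d) (hcd : c ≠ d) : Function.Injective ![a,b,c,d] := by
  intro i j hij
  fin_cases i <;> fin_cases j <;> simp_all

lemma inj3 {a b c : Fin n} (hab : a ≠ b) (hac : a ≠ c) (hbc : b ≠ c) :
    Function.Injective ![a,b,c] := by
  intro i j hij
  fin_cases i <;> fin_cases j <;> simp_all

/-- generic: nonemptiness of fiber vs model -/
lemma fiber_nonempty_iff (k : ℕ) (L : List (Fin k × Fin k))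
    (f : Fin k → Fin n) (hf : Function.Injective f) :
    ((tupSet r k L).filter (fun u => image u univ = image f univ)).Nonempty
      ↔ modSet k L (mat r f) ≠ ∅ := by
  classical
  rw [← card_pos, fiber_card_eq_model r k L f hf, card_pos, nonempty_iff_ne_empty]

lemma hasCycle4_iff (hr : IsTournament r) (s : Finset (Fin n)) (hs : s.card = 4) :
    HasCycle4 r s ↔
      ((tupSet r 4 Lc4).filter (fun u => image u univ = s)).Nonempty := by
  classical
  constructor
  · rintro ⟨a, b, c, d, hab, hac, had, hbc, hbd, hcd, rfl, h1, h2, h3, h4⟩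
    refine ⟨![a,b,c,d], mem_filter.2 ⟨mem_tupSet.2 ⟨inj4 hab hac had hbc hbd hcd, ?_⟩, ?_⟩⟩
    · intro p hp
      fin_cases hp <;> simpa using ‹_›
    · exact image4 a b c d
  · rintro ⟨u, hu⟩
    rw [mem_filter] at hu
    obtain ⟨hu1, hu2⟩ := hu
    obtain ⟨hinj, hpat⟩ := mem_tupSet.1 hu1
    refine ⟨u 0, u 1, u 2, u 3, ?_, ?_, ?_, ?_, ?_, ?_, ?_, ?_, ?_, ?_, ?_⟩
    · exact fun h => absurd (hinj h) (by decide)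
    · exact fun h => absurd (hinj h) (by decide)
    · exact fun h => absurd (hinj h) (by decide)
    · exact fun h => absurd (hinj h) (by decide)
    · exact fun h => absurd (hinj h) (by decide)
    · exact fun h => absurd (hinj h) (by decide)
    · rw [← hu2, ← image4]
      congr 1
      funext i
      fin_cases i <;> rfl
    · exact hpat (0,1) (by simp [Lc4])
    · exact hpat (1,2) (by simp [Lc4])
    · exact hpat (2,3) (by simp [Lc4])
    · exact hpat (3,0) (by simp [Lc4])

lemma isTrans4_iff (hr : IsTournament r) (s : Finset (Fin n)) :
    IsTrans4 r s ↔
      ((tupSet r 4 Lt4).filter (fun u => image u univ = s)).Nonempty := by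
  classical
  constructor
  · rintro ⟨a, b, c, d, hab, hac, had, hbc, hbd, hcd, rfl, h1, h2, h3, h4, h5, h6⟩
    refine ⟨![a,b,c,d], mem_filter.2 ⟨mem_tupSet.2 ⟨inj4 hab hac had hbc hbd hcd, ?_⟩, ?_⟩⟩
    · intro p hp
      fin_cases hp <;> simpa using ‹_›
    · exact image4 a b c d
  · rintro ⟨u, hu⟩
    rw [mem_filter] at hu
    obtain ⟨hu1, hu2⟩ := hu
    obtain ⟨hinj, hpat⟩ := mem_tupSet.1 hu1
    refine ⟨u 0, u 1, u 2, u 3,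
      fun h => absurd (hinj h) (by decide), fun h => absurd (hinj h) (by decide),
      fun h => absurd (hinj h) (by decide), fun h => absurd (hinj h) (by decide),
      fun h => absurd (hinj h) (by decide), fun h => absurd (hinj h) (by decide),
      ?_, hpat (0,1) (by simp [Lt4]), hpat (0,2) (by simp [Lt4]),
      hpat (0,3) (by simp [Lt4]), hpat (1,2) (by simp [Lt4]),
      hpat (1,3) (by simp [Lt4]), hpat (2,3) (by simp [Lt4])⟩
    rw [← hu2, ← image4]
    congr 1
    funext i
    fin_cases i <;> rfl

lemma isCyclicTriple_iff (hr : IsTournament r) (s : Finset (Fin n)) :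
    IsCyclicTriple r s ↔
      ((tupSet r 3 Lc3).filter (fun u => image u univ = s)).Nonempty := by
  classical
  constructor
  · rintro ⟨x, y, z, hxy, hyz, hxz, rfl, h1, h2, h3⟩
    refine ⟨![x,y,z], mem_filter.2 ⟨mem_tupSet.2 ⟨inj3 hxy hxz hyz, ?_⟩, ?_⟩⟩
    · intro p hp
      fin_cases hp <;> simpa using ‹_›
    · exact image3 x y z
  · rintro ⟨u, hu⟩
    rw [mem_filter] at hu
    obtain ⟨hu1, hu2⟩ := hu
    obtain ⟨hinj, hpat⟩ := mem_tupSet.1 hu1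
    refine ⟨u 0, u 1, u 2,
      fun h => absurd (hinj h) (by decide), fun h => absurd (hinj h) (by decide),
      fun h => absurd (hinj h) (by decide), ?_,
      hpat (0,1) (by simp [Lc3]), hpat (1,2) (by simp [Lc3]), hpat (2,0) (by simp [Lc3])⟩
    rw [← hu2, ← image3]
    congr 1
    funext i
    fin_cases i <;> rfl

lemma isTransTriple_iff (hr : IsTournament r) (s : Finset (Fin n)) :
    IsTransTriple r s ↔
      ((tupSet r 3 Lt3).filter (fun u => image u univ = s)).Nonempty := by
  classical
  constructor
  · rintro ⟨x, y, z, hxy, hyz, hxz, rfl, h1, h2, h3⟩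
    refine ⟨![x,y,z], mem_filter.2 ⟨mem_tupSet.2 ⟨inj3 hxy hxz hyz, ?_⟩, ?_⟩⟩
    · intro p hp
      fin_cases hp <;> simpa using ‹_›
    · exact image3 x y z
  · rintro ⟨u, hu⟩
    rw [mem_filter] at hu
    obtain ⟨hu1, hu2⟩ := hu
    obtain ⟨hinj, hpat⟩ := mem_tupSet.1 hu1
    refine ⟨u 0, u 1, u 2,
      fun h => absurd (hinj h) (by decide), fun h => absurd (hinj h) (by decide),
      fun h => absurd (hinj h) (by decide), ?_,
      hpat (0,1) (by simp [Lt3]), hpat (1,2) (by simp [Lt3]), hpat (0,2) (by simp [Lt3])⟩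
    rw [← hu2, ← image3]
    congr 1
    funext i
    fin_cases i <;> rfl

open Classical in
/-- per-4-set fiber counts, all at once -/
lemma fiber4_vals (hr : IsTournament r) (s : Finset (Fin n)) (hs : s.card = 4) :
    (((tupSet r 4 LP1).filter (fun u => image u univ = s)).card
        = if HasCycle4 r s then 2 else 0) ∧
    (((tupSet r 4 LP2).filter (fun u => image u univ = s)).card
        = if HasCycle4 r s then 2 else 0) ∧
    (((tupSet r 4 LP3).filter (fun u => image u univ = s)).card
        = if IsTrans4 r s then 2 else 0) ∧
    (((tupSet r 4 Lc4).filter (fun u => image u univ = s)).card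
        = if HasCycle4 r s then 4 else 0) ∧
    (((tupSet r 4 Lt4).filter (fun u => image u univ = s)).card
        = if IsTrans4 r s then 1 else 0) ∧
    (((tupSet r 4 Lz).filter (fun u => image u univ = s)).card
        + 3 * (if IsTrans4 r s then 1 else 0)
        = 3 + 3 * (if HasCycle4 r s then 1 else 0)) := by
  classical
  have hinj := enum_inj s hs
  have him := enum_image s hs
  have hfc : ∀ L : List (Fin 4 × Fin 4),
      ((tupSet r 4 L).filter (fun u => image u univ = s)).card
        = (modSet 4 L (mat r (enum s hs))).card := by
    intro L
    have := fiber_card_eq_model r 4 L (enum s hs) hinj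
    rwa [him] at this
  have hmk := mat_eq_mk4 hr (enum s hs) hinj
  obtain ⟨m1, m2, m3, m4, m5, m6⟩ := model4 (mat r (enum s hs) 0 1) (mat r (enum s hs) 0 2)
    (mat r (enum s hs) 0 3) (mat r (enum s hs) 1 2) (mat r (enum s hs) 1 3)
    (mat r (enum s hs) 2 3)
  rw [← hmk] at m1 m2 m3 m4 m5 m6
  have hc4 : HasCycle4 r s ↔ modSet 4 Lc4 (mat r (enum s hs)) ≠ ∅ := by
    rw [hasCycle4_iff hr s hs, ← card_pos, hfc Lc4, card_pos, nonempty_iff_ne_empty]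
  have ht4 : IsTrans4 r s ↔ modSet 4 Lt4 (mat r (enum s hs)) ≠ ∅ := by
    rw [isTrans4_iff hr s, ← card_pos, hfc Lt4, card_pos, nonempty_iff_ne_empty]
  have ec4 : (if modSet 4 Lc4 (mat r (enum s hs)) = ∅ then 0 else 2)
      = if HasCycle4 r s then 2 else 0 := by
    by_cases h : HasCycle4 r s
    · rw [if_pos h, if_neg (hc4.1 h)]
    · rw [if_neg h, if_pos (not_not.1 (fun hne => h (hc4.2 hne)))]
  have ec4' : (if modSet 4 Lc4 (mat r (enum s hs)) = ∅ then 0 else 4)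
      = if HasCycle4 r s then 4 else 0 := by
    by_cases h : HasCycle4 r s
    · rw [if_pos h, if_neg (hc4.1 h)]
    · rw [if_neg h, if_pos (not_not.1 (fun hne => h (hc4.2 hne)))]
  have ec4'' : (if modSet 4 Lc4 (mat r (enum s hs)) = ∅ then 0 else 1)
      = if HasCycle4 r s then 1 else 0 := by
    by_cases h : HasCycle4 r s
    · rw [if_pos h, if_neg (hc4.1 h)]
    · rw [if_neg h, if_pos (not_not.1 (fun hne => h (hc4.2 hne)))]
  have et4 : (if modSet 4 Lt4 (mat r (enum s hs)) = ∅ then 0 else 2)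
      = if IsTrans4 r s then 2 else 0 := by
    by_cases h : IsTrans4 r s
    · rw [if_pos h, if_neg (ht4.1 h)]
    · rw [if_neg h, if_pos (not_not.1 (fun hne => h (ht4.2 hne)))]
  have et4' : (if modSet 4 Lt4 (mat r (enum s hs)) = ∅ then 0 else 1)
      = if IsTrans4 r s then 1 else 0 := by
    by_cases h : IsTrans4 r s
    · rw [if_pos h, if_neg (ht4.1 h)]
    · rw [if_neg h, if_pos (not_not.1 (fun hne => h (ht4.2 hne)))]
  refine ⟨?_, ?_, ?_, ?_, ?_, ?_⟩
  · rw [hfc LP1, m1, ec4]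
  · rw [hfc LP2, m2, ec4]
  · rw [hfc LP3, m3, et4]
  · rw [hfc Lc4, m4, ec4']
  · rw [hfc Lt4, m5, et4']
  · rw [hfc Lz, ← et4', m6, ec4'']

open Classical in
lemma fiber3_vals (hr : IsTournament r) (s : Finset (Fin n)) (hs : s.card = 3) :
    (((tupSet r 3 Lc3).filter (fun u => image u univ = s)).card
        = if IsCyclicTriple r s then 3 else 0) ∧
    (((tupSet r 3 Lt3).filter (fun u => image u univ = s)).card
        = if IsTransTriple r s then 1 else 0) ∧
    ((if IsCyclicTriple r s then 1 else 0) + (if IsTransTriple r s then 1 else 0) = 1) := by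
  classical
  have hinj := enum_inj s hs
  have him := enum_image s hs
  have hfc : ∀ L : List (Fin 3 × Fin 3),
      ((tupSet r 3 L).filter (fun u => image u univ = s)).card
        = (modSet 3 L (mat r (enum s hs))).card := by
    intro L
    have := fiber_card_eq_model r 3 L (enum s hs) hinj
    rwa [him] at this
  have hmk := mat_eq_mk3 hr (enum s hs) hinj
  obtain ⟨m1, m2, m3⟩ := model3 (mat r (enum s hs) 0 1) (mat r (enum s hs) 0 2)
    (mat r (enum s hs) 1 2)
  rw [← hmk] at m1 m2 m3
  have hc3 : IsCyclicTriple r s ↔ modSet 3 Lc3 (mat r (enum s hs)) ≠ ∅ := by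
    rw [isCyclicTriple_iff hr s, ← card_pos, hfc Lc3, card_pos, nonempty_iff_ne_empty]
  have ht3 : IsTransTriple r s ↔ modSet 3 Lt3 (mat r (enum s hs)) ≠ ∅ := by
    rw [isTransTriple_iff hr s, ← card_pos, hfc Lt3, card_pos, nonempty_iff_ne_empty]
  have ec : ∀ c : ℕ, (if modSet 3 Lc3 (mat r (enum s hs)) = ∅ then 0 else c)
      = if IsCyclicTriple r s then c else 0 := by
    intro c
    by_cases h : IsCyclicTriple r s
    · rw [if_pos h, if_neg (hc3.1 h)]
    · rw [if_neg h, if_pos (not_not.1 (fun hne => h (hc3.2 hne)))]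
  have et : ∀ c : ℕ, (if modSet 3 Lt3 (mat r (enum s hs)) = ∅ then 0 else c)
      = if IsTransTriple r s then c else 0 := by
    intro c
    by_cases h : IsTransTriple r s
    · rw [if_pos h, if_neg (ht3.1 h)]
    · rw [if_neg h, if_pos (not_not.1 (fun hne => h (ht3.2 hne)))]
  refine ⟨?_, ?_, ?_⟩
  · rw [hfc Lc3, m1, ec]
  · rw [hfc Lt3, m2, et]
  · rw [← ec 1, ← et 1, m3]

lemma sum_ite_count {α : Type*} (t : Finset α) (p : α → Prop) [DecidablePred p] (c : ℕ) :
    ∑ s ∈ t, (if p s then c else 0) = c * (t.filter p).card := by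
  rw [← Finset.sum_filter, Finset.sum_const, smul_eq_mul, mul_comm]

open Classical in
lemma NP1_eq (hr : IsTournament r) : (tupSet r 4 LP1).card = 2 * cyc4Count r := by
  rw [tup_card_eq_sum_pc,
    Finset.sum_congr rfl (fun s hs => (fiber4_vals hr s (mem_powersetCard.1 hs).2).1),
    sum_ite_count]
  rfl

open Classical in
lemma NP2_eq (hr : IsTournament r) : (tupSet r 4 LP2).card = 2 * cyc4Count r := by
  rw [tup_card_eq_sum_pc,
    Finset.sum_congr rfl (fun s hs => (fiber4_vals hr s (mem_powersetCard.1 hs).2).2.1),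
    sum_ite_count]
  rfl

open Classical in
lemma NP3_eq (hr : IsTournament r) : (tupSet r 4 LP3).card = 2 * trans4Count r := by
  rw [tup_card_eq_sum_pc,
    Finset.sum_congr rfl (fun s hs => (fiber4_vals hr s (mem_powersetCard.1 hs).2).2.2.1),
    sum_ite_count]
  rfl

open Classical in
lemma Lz_eq (hr : IsTournament r) :
    (tupSet r 4 Lz).card + 3 * trans4Count r = 3 * n.choose 4 + 3 * cyc4Count r := by
  have key : ∑ s ∈ (univ : Finset (Fin n)).powersetCard 4,
      (((tupSet r 4 Lz).filter (fun u => image u univ = s)).card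
        + 3 * (if IsTrans4 r s then 1 else 0))
      = ∑ s ∈ (univ : Finset (Fin n)).powersetCard 4,
      (3 + 3 * (if HasCycle4 r s then 1 else 0)) :=
    Finset.sum_congr rfl (fun s hs => (fiber4_vals hr s (mem_powersetCard.1 hs).2).2.2.2.2.2)
  rw [sum_add_distrib, sum_add_distrib, ← Finset.mul_sum, ← Finset.mul_sum,
    sum_ite_count, sum_ite_count, sum_const, ← tup_card_eq_sum_pc] at key
  have hpc : ((univ : Finset (Fin n)).powersetCard 4).card = n.choose 4 := by
    rw [Finset.card_powersetCard, card_univ, Fintype.card_fin]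
  rw [hpc] at key
  simp only [smul_eq_mul] at key
  have e1 : trans4Count r = (((univ : Finset (Fin n)).powersetCard 4).filter (IsTrans4 r)).card := rfl
  have e2 : cyc4Count r = (((univ : Finset (Fin n)).powersetCard 4).filter (HasCycle4 r)).card := rfl
  rw [e1, e2]
  omega

open Classical in
lemma N3c_eq (hr : IsTournament r) : (tupSet r 3 Lc3).card = 3 * cyc3Count r := by
  rw [tup_card_eq_sum_pc,
    Finset.sum_congr rfl (fun s hs => (fiber3_vals hr s (mem_powersetCard.1 hs).2).1),
    sum_ite_count]
  rfl

open Classical in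
lemma N3t_eq (hr : IsTournament r) : (tupSet r 3 Lt3).card = trans3Count r := by
  rw [tup_card_eq_sum_pc,
    Finset.sum_congr rfl (fun s hs => (fiber3_vals hr s (mem_powersetCard.1 hs).2).2.1),
    sum_ite_count, one_mul]
  rfl

open Classical in
lemma c3_t3_eq (hr : IsTournament r) : cyc3Count r + trans3Count r = n.choose 3 := by
  have key : ∑ s ∈ (univ : Finset (Fin n)).powersetCard 3,
      ((if IsCyclicTriple r s then 1 else 0) + (if IsTransTriple r s then 1 else 0))
      = ∑ s ∈ (univ : Finset (Fin n)).powersetCard 3, 1 :=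
    Finset.sum_congr rfl (fun s hs => (fiber3_vals hr s (mem_powersetCard.1 hs).2).2.2)
  rw [sum_add_distrib, sum_ite_count, sum_ite_count, sum_const, smul_eq_mul, mul_one,
    Finset.card_powersetCard, card_univ, Fintype.card_fin] at key
  rw [← one_mul (cyc3Count r), ← one_mul (trans3Count r)]
  exact key

open Classical in
lemma Lz_card (hr : IsTournament r) :
    (tupSet r 4 Lz).card = (tupSet r 3 Lc3).card * (n - 3) := by
  classical
  rw [card_eq_sum_card_fiberwise
    (f := fun u : Fin 4 → Fin n => (![u 0, u 1, u 2] : Fin 3 → Fin n))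
    (t := tupSet r 3 Lc3) (fun u hu => by
      obtain ⟨hinj, hpat⟩ := mem_tupSet.1 hu
      refine mem_tupSet.2 ⟨?_, ?_⟩
      · exact inj3 (fun h => absurd (hinj h) (by decide))
          (fun h => absurd (hinj h) (by decide)) (fun h => absurd (hinj h) (by decide))
      · intro p hp
        fin_cases hp
        · exact hpat (0,1) (by simp [Lz])
        · exact hpat (1,2) (by simp [Lz])
        · exact hpat (2,0) (by simp [Lz]))]
  rw [Finset.sum_congr rfl (fun t ht => ?_), sum_const, smul_eq_mul]
  obtain ⟨tinj, tpat⟩ := mem_tupSet.1 ht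
  have h01 : t 0 ≠ t 1 := fun h => absurd (tinj h) (by decide)
  have h02 : t 0 ≠ t 2 := fun h => absurd (tinj h) (by decide)
  have h12 : t 1 ≠ t 2 := fun h => absurd (tinj h) (by decide)
  have hcard : ({t 0, t 1, t 2} : Finset (Fin n)).card = 3 := by
    rw [card_insert_of_notMem (by simp [h01, h02]),
      card_insert_of_notMem (by simp [h12]), card_singleton]
  have : ((tupSet r 4 Lz).filter (fun u => ![u 0, u 1, u 2] = t)).card
      = (univ \ {t 0, t 1, t 2} : Finset (Fin n)).card := by
    apply card_bij (fun u _ => u 3)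
    · intro u hu
      rw [mem_filter] at hu
      obtain ⟨hu1, hu2⟩ := hu
      obtain ⟨hinj, -⟩ := mem_tupSet.1 hu1
      have e0 : t 0 = u 0 := by rw [← hu2]; rfl
      have e1 : t 1 = u 1 := by rw [← hu2]; rfl
      have e2 : t 2 = u 2 := by rw [← hu2]; rfl
      simp only [mem_sdiff, mem_univ, true_and, mem_insert, mem_singleton, e0, e1, e2]
      push_neg
      exact ⟨fun h => absurd (hinj h) (by decide), fun h => absurd (hinj h) (by decide),
        fun h => absurd (hinj h) (by decide)⟩
    · intro u1 hu1 u2 hu2 he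
      rw [mem_filter] at hu1 hu2
      have ht12 := hu1.2.trans hu2.2.symm
      funext i
      fin_cases i
      · exact congrFun ht12 0
      · exact congrFun ht12 1
      · exact congrFun ht12 2
      · exact he
    · intro v hv
      simp only [mem_sdiff, mem_univ, true_and, mem_insert, mem_singleton] at hv
      push_neg at hv
      obtain ⟨hv0, hv1, hv2⟩ := hv
      refine ⟨![t 0, t 1, t 2, v], ?_, rfl⟩
      rw [mem_filter]
      refine ⟨mem_tupSet.2 ⟨inj4 h01 h02 (Ne.symm hv0) h12 (Ne.symm hv1) (Ne.symm hv2), ?_⟩, ?_⟩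
      · intro p hp
        fin_cases hp
        · exact tpat (0,1) (by simp [Lc3])
        · exact tpat (1,2) (by simp [Lc3])
        · exact tpat (2,0) (by simp [Lc3])
      · funext i
        fin_cases i <;> rfl
  rw [this, card_sdiff_of_subset (subset_univ _), card_univ, Fintype.card_fin, hcard]

open Classical in
noncomputable def EDG (r : Fin n → Fin n → Prop) : Finset (Fin n × Fin n) :=
  univ.filter (fun e => r e.1 e.2)

open Classical in
noncomputable def gED (r : Fin n → Fin n → Prop) (e : Fin n × Fin n) : ℕ :=
  (univ.filter (fun b => r e.2 b ∧ r b e.1)).card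

open Classical in
noncomputable def hED (r : Fin n → Fin n → Prop) (e : Fin n × Fin n) : ℕ :=
  (univ.filter (fun b => r e.1 b ∧ r b e.2)).card

lemma mem_EDG {e : Fin n × Fin n} : e ∈ EDG r ↔ r e.1 e.2 := by
  classical
  simp [EDG]

lemma EDG_ne (hr : IsTournament r) {e : Fin n × Fin n} (he : e ∈ EDG r) : e.1 ≠ e.2 := by
  intro h
  exact hr.1 e.2 (h ▸ mem_EDG.1 he)

lemma edg_card (hr : IsTournament r) : 2 * (EDG r).card = n * n - n := by
  classical
  have hsub : (EDG r).image Prod.swap ∪ EDG r = (univ : Finset (Fin n)).offDiag := by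
    ext e
    simp only [mem_union, mem_image, Finset.mem_offDiag, mem_univ, true_and]
    constructor
    · rintro (⟨a, ha, rfl⟩ | he)
      · exact Ne.symm (EDG_ne hr ha)
      · exact EDG_ne hr he
    · intro hne
      rcases hr.2 e.1 e.2 hne with ⟨h1, -⟩ | ⟨h1, -⟩
      · exact Or.inr (mem_EDG.2 h1)
      · exact Or.inl ⟨e.swap, mem_EDG.2 h1, by simp⟩
  have hdisj : Disjoint ((EDG r).image Prod.swap) (EDG r) := by
    rw [Finset.disjoint_left]
    intro e he1 he2
    obtain ⟨a, ha, rfl⟩ := mem_image.1 he1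
    have h1 : r a.1 a.2 := mem_EDG.1 ha
    have h2 : r a.2 a.1 := mem_EDG.1 he2
    rcases hr.2 a.1 a.2 (EDG_ne hr ha) with ⟨-, hh⟩ | ⟨-, hh⟩
    · exact hh h2
    · exact hh h1
  have := Finset.card_union_of_disjoint hdisj
  rw [hsub, Finset.offDiag_card, card_univ, Fintype.card_fin,
    Finset.card_image_of_injective _ Prod.swap_injective] at this
  omega

open Classical in
lemma sum_g (hr : IsTournament r) : ∑ e ∈ EDG r, gED r e = (tupSet r 3 Lc3).card := by
  classical
  rw [card_eq_sum_card_fiberwise (f := fun u : Fin 3 → Fin n => (u 0, u 1)) (t := EDG r)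
    (fun u hu => mem_EDG.2 ((mem_tupSet.1 hu).2 (0,1) (by simp [Lc3])))]
  apply Finset.sum_congr rfl
  intro e he
  symm
  apply card_bij (fun u _ => u 2)
  · intro u hu
    rw [mem_filter] at hu
    obtain ⟨hu1, hu2⟩ := hu
    obtain ⟨-, hpat⟩ := mem_tupSet.1 hu1
    have e0 : u 0 = e.1 := congrArg Prod.fst hu2
    have e1 : u 1 = e.2 := congrArg Prod.snd hu2
    simp only [gED, mem_filter, mem_univ, true_and]
    exact ⟨e1 ▸ hpat (1,2) (by simp [Lc3]), e0 ▸ hpat (2,0) (by simp [Lc3])⟩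
  · intro u1 hu1 u2 hu2 he2
    rw [mem_filter] at hu1 hu2
    funext i
    fin_cases i
    · exact (congrArg Prod.fst hu1.2).trans (congrArg Prod.fst hu2.2).symm
    · exact (congrArg Prod.snd hu1.2).trans (congrArg Prod.snd hu2.2).symm
    · exact he2
  · intro b hb
    simp only [gED, mem_filter, mem_univ, true_and] at hb
    have hre : r e.1 e.2 := mem_EDG.1 he
    have hb1 : b ≠ e.1 := fun h => hr.1 e.1 (h ▸ hb.2)
    have hb2 : b ≠ e.2 := fun h => hr.1 e.2 (h ▸ hb.1)
    refine ⟨![e.1, e.2, b], mem_filter.2 ⟨mem_tupSet.2 ⟨inj3 (EDG_ne hr he) (Ne.symm hb1)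
      (Ne.symm hb2), ?_⟩, ?_⟩, rfl⟩
    · intro p hp
      fin_cases hp
      · exact hre
      · exact hb.1
      · exact hb.2
    · show ((e.1 : Fin n), (e.2 : Fin n)) = e
      exact Prod.ext rfl rfl

open Classical in
lemma sum_h (hr : IsTournament r) : ∑ e ∈ EDG r, hED r e = (tupSet r 3 Lt3).card := by
  classical
  rw [card_eq_sum_card_fiberwise (f := fun u : Fin 3 → Fin n => (u 0, u 2)) (t := EDG r)
    (fun u hu => mem_EDG.2 ((mem_tupSet.1 hu).2 (0,2) (by simp [Lt3])))]
  apply Finset.sum_congr rfl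
  intro e he
  symm
  apply card_bij (fun u _ => u 1)
  · intro u hu
    rw [mem_filter] at hu
    obtain ⟨hu1, hu2⟩ := hu
    obtain ⟨-, hpat⟩ := mem_tupSet.1 hu1
    have e0 : u 0 = e.1 := congrArg Prod.fst hu2
    have e1 : u 2 = e.2 := congrArg Prod.snd hu2
    simp only [hED, mem_filter, mem_univ, true_and]
    exact ⟨e0 ▸ hpat (0,1) (by simp [Lt3]), e1 ▸ hpat (1,2) (by simp [Lt3])⟩
  · intro u1 hu1 u2 hu2 he2
    rw [mem_filter] at hu1 hu2
    funext i
    fin_cases i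
    · exact (congrArg Prod.fst hu1.2).trans (congrArg Prod.fst hu2.2).symm
    · exact he2
    · exact (congrArg Prod.snd hu1.2).trans (congrArg Prod.snd hu2.2).symm
  · intro b hb
    simp only [hED, mem_filter, mem_univ, true_and] at hb
    have hre : r e.1 e.2 := mem_EDG.1 he
    have hb1 : b ≠ e.1 := fun h => hr.1 e.1 (h ▸ hb.1)
    have hb2 : b ≠ e.2 := fun h => hr.1 e.2 (h ▸ hb.2)
    refine ⟨![e.1, b, e.2], mem_filter.2 ⟨mem_tupSet.2 ⟨inj3 (Ne.symm hb1) (EDG_ne hr he)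
      hb2, ?_⟩, ?_⟩, rfl⟩
    · intro p hp
      fin_cases hp
      · exact hb.1
      · exact hb.2
      · exact hre
    · show ((e.1 : Fin n), (e.2 : Fin n)) = e
      exact Prod.ext rfl rfl

open Classical in
lemma fiber_LP1 (hr : IsTournament r) (e : Fin n × Fin n) (he : e ∈ EDG r) :
    ((tupSet r 4 LP1).filter (fun u => (u 0, u 1) = e)).card
      = gED r e * gED r e - gED r e := by
  classical
  simp only [gED]
  rw [← Finset.offDiag_card]
  apply card_bij (fun u _ => (u 2, u 3))
  · intro u hu
    rw [mem_filter] at hu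
    obtain ⟨hu1, hu2⟩ := hu
    obtain ⟨hinj, hpat⟩ := mem_tupSet.1 hu1
    have e0 : u 0 = e.1 := congrArg Prod.fst hu2
    have e1 : u 1 = e.2 := congrArg Prod.snd hu2
    rw [Finset.mem_offDiag]
    refine ⟨?_, ?_, fun h => absurd (hinj h) (by decide)⟩
    · simp only [gED, mem_filter, mem_univ, true_and]
      exact ⟨e1 ▸ hpat (1,2) (by simp [LP1]), e0 ▸ hpat (2,0) (by simp [LP1])⟩
    · simp only [gED, mem_filter, mem_univ, true_and]
      exact ⟨e1 ▸ hpat (1,3) (by simp [LP1]), e0 ▸ hpat (3,0) (by simp [LP1])⟩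
  · intro u1 hu1 u2 hu2 he2
    rw [mem_filter] at hu1 hu2
    funext i
    fin_cases i
    · exact (congrArg Prod.fst hu1.2).trans (congrArg Prod.fst hu2.2).symm
    · exact (congrArg Prod.snd hu1.2).trans (congrArg Prod.snd hu2.2).symm
    · exact congrArg Prod.fst he2
    · exact congrArg Prod.snd he2
  · rintro ⟨b, c⟩ hbc
    rw [Finset.mem_offDiag] at hbc
    obtain ⟨hb, hc, hbc⟩ := hbc
    simp only [gED, mem_filter, mem_univ, true_and] at hb hc
    have hre : r e.1 e.2 := mem_EDG.1 he
    have hb1 : b ≠ e.1 := fun h => hr.1 e.1 (h ▸ hb.2)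
    have hb2 : b ≠ e.2 := fun h => hr.1 e.2 (h ▸ hb.1)
    have hc1 : c ≠ e.1 := fun h => hr.1 e.1 (h ▸ hc.2)
    have hc2 : c ≠ e.2 := fun h => hr.1 e.2 (h ▸ hc.1)
    refine ⟨![e.1, e.2, b, c], mem_filter.2 ⟨mem_tupSet.2 ⟨inj4 (EDG_ne hr he) (Ne.symm hb1)
      (Ne.symm hc1) (Ne.symm hb2) (Ne.symm hc2) hbc, ?_⟩, ?_⟩, rfl⟩
    · intro p hp
      fin_cases hp
      · exact hre
      · exact hb.1
      · exact hb.2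
      · exact hc.1
      · exact hc.2
    · show ((e.1 : Fin n), (e.2 : Fin n)) = e
      exact Prod.ext rfl rfl

open Classical in
lemma fiber_LP2 (hr : IsTournament r) (e : Fin n × Fin n) (he : e ∈ EDG r) :
    ((tupSet r 4 LP2).filter (fun u => (u 0, u 1) = e)).card
      = gED r e * hED r e := by
  classical
  rw [gED, hED, ← Finset.card_product]
  apply card_bij (fun u _ => (u 2, u 3))
  · intro u hu
    rw [mem_filter] at hu
    obtain ⟨hu1, hu2⟩ := hu
    obtain ⟨hinj, hpat⟩ := mem_tupSet.1 hu1
    have e0 : u 0 = e.1 := congrArg Prod.fst hu2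
    have e1 : u 1 = e.2 := congrArg Prod.snd hu2
    rw [Finset.mem_product]
    constructor
    · simp only [mem_filter, mem_univ, true_and]
      exact ⟨e1 ▸ hpat (1,2) (by simp [LP2]), e0 ▸ hpat (2,0) (by simp [LP2])⟩
    · simp only [mem_filter, mem_univ, true_and]
      exact ⟨e0 ▸ hpat (0,3) (by simp [LP2]), e1 ▸ hpat (3,1) (by simp [LP2])⟩
  · intro u1 hu1 u2 hu2 he2
    rw [mem_filter] at hu1 hu2
    funext i
    fin_cases i
    · exact (congrArg Prod.fst hu1.2).trans (congrArg Prod.fst hu2.2).symm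
    · exact (congrArg Prod.snd hu1.2).trans (congrArg Prod.snd hu2.2).symm
    · exact congrArg Prod.fst he2
    · exact congrArg Prod.snd he2
  · rintro ⟨b, c⟩ hbc
    rw [Finset.mem_product] at hbc
    obtain ⟨hb, hc⟩ := hbc
    simp only [mem_filter, mem_univ, true_and] at hb hc
    have hre : r e.1 e.2 := mem_EDG.1 he
    have hb1 : b ≠ e.1 := fun h => hr.1 e.1 (h ▸ hb.2)
    have hb2 : b ≠ e.2 := fun h => hr.1 e.2 (h ▸ hb.1)
    have hc1 : c ≠ e.1 := fun h => hr.1 e.1 (h ▸ hc.1)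
    have hc2 : c ≠ e.2 := fun h => hr.1 e.2 (h ▸ hc.2)
    have hbc : b ≠ c := by
      intro h
      subst h
      rcases hr.2 b e.1 hb1 with ⟨-, hh⟩ | ⟨-, hh⟩
      · exact hh hc.1
      · exact hh hb.2
    refine ⟨![e.1, e.2, b, c], mem_filter.2 ⟨mem_tupSet.2 ⟨inj4 (EDG_ne hr he) (Ne.symm hb1)
      (Ne.symm hc1) (Ne.symm hb2) (Ne.symm hc2) hbc, ?_⟩, ?_⟩, rfl⟩
    · intro p hp
      fin_cases hp
      · exact hre
      · exact hb.1
      · exact hb.2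
      · exact hc.1
      · exact hc.2
    · show ((e.1 : Fin n), (e.2 : Fin n)) = e
      exact Prod.ext rfl rfl

open Classical in
lemma fiber_LP3 (hr : IsTournament r) (e : Fin n × Fin n) (he : e ∈ EDG r) :
    ((tupSet r 4 LP3).filter (fun u => (u 0, u 1) = e)).card
      = hED r e * hED r e - hED r e := by
  classical
  simp only [hED]
  rw [← Finset.offDiag_card]
  apply card_bij (fun u _ => (u 2, u 3))
  · intro u hu
    rw [mem_filter] at hu
    obtain ⟨hu1, hu2⟩ := hu
    obtain ⟨hinj, hpat⟩ := mem_tupSet.1 hu1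
    have e0 : u 0 = e.1 := congrArg Prod.fst hu2
    have e1 : u 1 = e.2 := congrArg Prod.snd hu2
    rw [Finset.mem_offDiag]
    refine ⟨?_, ?_, fun h => absurd (hinj h) (by decide)⟩
    · simp only [hED, mem_filter, mem_univ, true_and]
      exact ⟨e0 ▸ hpat (0,2) (by simp [LP3]), e1 ▸ hpat (2,1) (by simp [LP3])⟩
    · simp only [hED, mem_filter, mem_univ, true_and]
      exact ⟨e0 ▸ hpat (0,3) (by simp [LP3]), e1 ▸ hpat (3,1) (by simp [LP3])⟩
  · intro u1 hu1 u2 hu2 he2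
    rw [mem_filter] at hu1 hu2
    funext i
    fin_cases i
    · exact (congrArg Prod.fst hu1.2).trans (congrArg Prod.fst hu2.2).symm
    · exact (congrArg Prod.snd hu1.2).trans (congrArg Prod.snd hu2.2).symm
    · exact congrArg Prod.fst he2
    · exact congrArg Prod.snd he2
  · rintro ⟨b, c⟩ hbc
    rw [Finset.mem_offDiag] at hbc
    obtain ⟨hb, hc, hbc⟩ := hbc
    simp only [hED, mem_filter, mem_univ, true_and] at hb hc
    have hre : r e.1 e.2 := mem_EDG.1 he
    have hb1 : b ≠ e.1 := fun h => hr.1 e.1 (h ▸ hb.1)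
    have hb2 : b ≠ e.2 := fun h => hr.1 e.2 (h ▸ hb.2)
    have hc1 : c ≠ e.1 := fun h => hr.1 e.1 (h ▸ hc.1)
    have hc2 : c ≠ e.2 := fun h => hr.1 e.2 (h ▸ hc.2)
    refine ⟨![e.1, e.2, b, c], mem_filter.2 ⟨mem_tupSet.2 ⟨inj4 (EDG_ne hr he) (Ne.symm hb1)
      (Ne.symm hc1) (Ne.symm hb2) (Ne.symm hc2) hbc, ?_⟩, ?_⟩, rfl⟩
    · intro p hp
      fin_cases hp
      · exact hre
      · exact hb.1
      · exact hb.2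
      · exact hc.1
      · exact hc.2
    · show ((e.1 : Fin n), (e.2 : Fin n)) = e
      exact Prod.ext rfl rfl

lemma nat_sq_helper (m : ℕ) : (m * m - m) + m = m * m := by
  rcases Nat.eq_zero_or_pos m with rfl | h
  · simp
  · exact Nat.sub_add_cancel (Nat.le_mul_of_pos_left m h)

open Classical in
lemma sum_gg (hr : IsTournament r) :
    ∑ e ∈ EDG r, gED r e * gED r e = (tupSet r 4 LP1).card + ∑ e ∈ EDG r, gED r e := by
  classical
  rw [card_eq_sum_card_fiberwise (f := fun u : Fin 4 → Fin n => (u 0, u 1)) (t := EDG r)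
    (fun u hu => mem_EDG.2 ((mem_tupSet.1 hu).2 (0,1) (by simp [LP1]))),
    Finset.sum_congr rfl (fun e he => fiber_LP1 hr e he), ← sum_add_distrib]
  exact (Finset.sum_congr rfl (fun e _ => (nat_sq_helper (gED r e)).symm))

open Classical in
lemma sum_ggh (hr : IsTournament r) :
    ∑ e ∈ EDG r, gED r e * hED r e = (tupSet r 4 LP2).card := by
  classical
  rw [card_eq_sum_card_fiberwise (f := fun u : Fin 4 → Fin n => (u 0, u 1)) (t := EDG r)
    (fun u hu => mem_EDG.2 ((mem_tupSet.1 hu).2 (0,1) (by simp [LP2]))),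
    Finset.sum_congr rfl (fun e he => fiber_LP2 hr e he)]

open Classical in
lemma sum_hh (hr : IsTournament r) :
    ∑ e ∈ EDG r, hED r e * hED r e = (tupSet r 4 LP3).card + ∑ e ∈ EDG r, hED r e := by
  classical
  rw [card_eq_sum_card_fiberwise (f := fun u : Fin 4 → Fin n => (u 0, u 1)) (t := EDG r)
    (fun u hu => mem_EDG.2 ((mem_tupSet.1 hu).2 (0,1) (by simp [LP3]))),
    Finset.sum_congr rfl (fun e he => fiber_LP3 hr e he), ← sum_add_distrib]
  exact (Finset.sum_congr rfl (fun e _ => (nat_sq_helper (hED r e)).symm))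

lemma ch3 (n : ℕ) : 6 * n.choose 3 = n * (n-1) * (n-2) := by
  have h := (Nat.descFactorial_eq_factorial_mul_choose n 3).symm
  have h2 : n.descFactorial 3 = (n - 2) * ((n-1) * (n * 1)) := by
    rw [show (3:ℕ) = 2 + 1 from rfl, Nat.descFactorial_succ, Nat.descFactorial_succ,
      Nat.descFactorial_succ, Nat.descFactorial_zero]
    norm_num
  calc 6 * n.choose 3 = Nat.factorial 3 * n.choose 3 := by norm_num [Nat.factorial]
    _ = (n-2) * ((n-1) * (n*1)) := by rw [← h2]; exact h
    _ = n * (n-1) * (n-2) := by ring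

lemma ch4 (n : ℕ) : 24 * n.choose 4 = n * (n-1) * (n-2) * (n-3) := by
  have h := (Nat.descFactorial_eq_factorial_mul_choose n 4).symm
  have h2 : n.descFactorial 4 = (n - 3) * ((n - 2) * ((n-1) * (n * 1))) := by
    rw [show (4:ℕ) = 3 + 1 from rfl, Nat.descFactorial_succ, Nat.descFactorial_succ,
      Nat.descFactorial_succ, Nat.descFactorial_succ, Nat.descFactorial_zero]
    norm_num
  calc 24 * n.choose 4 = Nat.factorial 4 * n.choose 4 := by norm_num [Nat.factorial]
    _ = (n-3) * ((n-2) * ((n-1) * (n*1))) := by rw [← h2]; exact h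
    _ = n * (n-1) * (n-2) * (n-3) := by ring

set_option maxHeartbeats 1600000 in
open Classical in
theorem stmt_9' :
    ∀ ε : ℝ, 0 < ε → ∃ N : ℕ, ∀ n : ℕ, N ≤ n → ∀ r : Fin n → Fin n → Prop,
      IsTournament r →
        (cyc4Count r : ℝ) / (n.choose 4 : ℝ) ≥
          18 * ((cyc3Count r : ℝ) / (n.choose 3 : ℝ)) ^ 2 /
            (1 + 8 * ((cyc3Count r : ℝ) / (n.choose 3 : ℝ))) - ε := by
  intro ε hε
  refine ⟨⌈(3:ℝ)/(2*ε)⌉₊ + 4, fun n hn r hr => ?_⟩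
  classical
  have hn4 : 4 ≤ n := le_trans (by omega) hn
  have hnR : (4:ℝ) ≤ (n:ℝ) := by exact_mod_cast hn4
  have hnN : (3:ℝ)/(2*ε) + 4 ≤ (n:ℝ) := by
    have h0 : ((⌈(3:ℝ)/(2*ε)⌉₊ + 4 : ℕ) : ℝ) ≤ (n : ℝ) := Nat.cast_le.2 hn
    push_cast at h0
    linarith [Nat.le_ceil ((3:ℝ)/(2*ε))]
  set nR : ℝ := (n:ℝ) with hnRdef
  -- ℕ identities
  set P := cyc3Count r with hPdef
  set Q := cyc4Count r with hQdef
  set T3 := trans3Count r with hT3def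
  set T4 := trans4Count r with hT4def
  have nA : ∑ e ∈ EDG r, gED r e = 3 * P := by rw [sum_g hr, N3c_eq hr]
  have nB : ∑ e ∈ EDG r, hED r e = T3 := by rw [sum_h hr, N3t_eq hr]
  have nGG : ∑ e ∈ EDG r, gED r e * gED r e = 2 * Q + 3 * P := by
    rw [sum_gg hr, NP1_eq hr, nA]
  have nGH : ∑ e ∈ EDG r, gED r e * hED r e = 2 * Q := by rw [sum_ggh hr, NP2_eq hr]
  have nHH : ∑ e ∈ EDG r, hED r e * hED r e = 2 * T4 + T3 := by
    rw [sum_hh hr, NP3_eq hr, nB]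
  have nPT : P + T3 = n.choose 3 := c3_t3_eq hr
  have nT4 : 3 * P * (n - 3) + 3 * T4 = 3 * n.choose 4 + 3 * Q := by
    have h1 := Lz_eq (r := r) hr
    have h2 := Lz_card (r := r) hr
    rw [h2, N3c_eq hr] at h1
    exact h1
  have nE : 2 * (EDG r).card = n*n - n := edg_card hr
  -- real abbreviations
  set C3 : ℝ := (n.choose 3 : ℝ) with hC3def
  set C4 : ℝ := (n.choose 4 : ℝ) with hC4def
  have hC3pos : 0 < C3 := by
    have h : 0 < n.choose 3 := Nat.choose_pos (by omega)
    rw [hC3def]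
    exact_mod_cast h
  have hC4pos : 0 < C4 := by
    have h : 0 < n.choose 4 := Nat.choose_pos (by omega)
    rw [hC4def]
    exact_mod_cast h
  have h1n : (1:ℕ) ≤ n := by omega
  have h2n : (2:ℕ) ≤ n := by omega
  have h3n : (3:ℕ) ≤ n := by omega
  have hnn : n ≤ n * n := Nat.le_mul_of_pos_left n (by omega)
  have hC3v : C3 = nR * (nR - 1) * (nR - 2) / 6 := by
    have h := ch3 n
    have : (6:ℝ) * C3 = nR * (nR - 1) * (nR - 2) := by
      calc (6:ℝ) * C3 = ((6 * n.choose 3 : ℕ) : ℝ) := by rw [hC3def]; push_cast; ring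
        _ = ((n * (n-1) * (n-2) : ℕ) : ℝ) := by rw [h]
        _ = nR * (nR - 1) * (nR - 2) := by push_cast [h1n, h2n]; ring
    linarith
  have hC4v : C4 = nR * (nR - 1) * (nR - 2) * (nR - 3) / 24 := by
    have h := ch4 n
    have : (24:ℝ) * C4 = nR * (nR - 1) * (nR - 2) * (nR - 3) := by
      calc (24:ℝ) * C4 = ((24 * n.choose 4 : ℕ) : ℝ) := by rw [hC4def]; push_cast; ring
        _ = ((n * (n-1) * (n-2) * (n-3) : ℕ) : ℝ) := by rw [h]
        _ = nR * (nR - 1) * (nR - 2) * (nR - 3) := by push_cast [h1n, h2n, h3n]; ring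
    linarith
  have hEv : (((EDG r).card : ℕ) : ℝ) = (nR * nR - nR)/2 := by
    have : (2:ℝ) * ((EDG r).card : ℝ) = nR * nR - nR := by
      calc (2:ℝ) * ((EDG r).card : ℝ) = ((2 * (EDG r).card : ℕ) : ℝ) := by push_cast; ring
        _ = ((n * n - n : ℕ) : ℝ) := by rw [nE]
        _ = nR * nR - nR := by push_cast [hnn]; ring
    linarith
  -- p
  set p : ℝ := (P:ℝ)/C3 with hpdef
  have hPle : (P:ℝ) ≤ C3 := by
    have h : P ≤ n.choose 3 := by
      calc P ≤ ((univ : Finset (Fin n)).powersetCard 3).card := card_filter_le _ _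
        _ = n.choose 3 := by rw [card_powersetCard, card_univ, Fintype.card_fin]
    rw [hC3def]
    exact_mod_cast h
  have hp0 : 0 ≤ p := div_nonneg (Nat.cast_nonneg _) hC3pos.le
  have hp1 : p ≤ 1 := by rw [hpdef, div_le_one hC3pos]; exact hPle
  have hP : (P:ℝ) = p * C3 := by rw [hpdef]; field_simp
  -- real identities
  have rT3 : (T3:ℝ) = C3 - (P:ℝ) := by
    have h : ((P + T3 : ℕ) : ℝ) = C3 := by rw [nPT, hC3def]
    push_cast at h
    linarith
  have rT4 : (T4:ℝ) = C4 + (Q:ℝ) - (nR - 3) * (P:ℝ) := by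
    have h : ((3 * P * (n - 3) + 3 * T4 : ℕ) : ℝ) = ((3 * n.choose 4 + 3 * Q : ℕ) : ℝ) := by
      rw [nT4]
    push_cast [h3n] at h
    rw [hC4def]
    linarith
  -- Cauchy–Schwarz
  set a : ℝ := 1 + 2*p with hadef
  set b : ℝ := 6*p with hbdef
  have cs := sq_sum_le_card_mul_sum_sq (s := EDG r)
    (f := fun e => a * (gED r e : ℝ) + b * (hED r e : ℝ))
  have lhs_eq : ∑ e ∈ EDG r, (a * (gED r e : ℝ) + b * (hED r e : ℝ))
      = a * (3 * (P:ℝ)) + b * (T3:ℝ) := by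
    rw [sum_add_distrib, ← mul_sum, ← mul_sum, ← Nat.cast_sum, ← Nat.cast_sum, nA, nB]
    push_cast
    ring
  have rhs_eq : ∑ e ∈ EDG r, (a * (gED r e : ℝ) + b * (hED r e : ℝ))^2
      = a^2 * (2*(Q:ℝ) + 3*(P:ℝ)) + 2*a*b*(2*(Q:ℝ)) + b^2 * (2*(T4:ℝ) + (T3:ℝ)) := by
    have e1 : ∀ e ∈ EDG r, (a * (gED r e : ℝ) + b * (hED r e : ℝ))^2
        = a^2 * ((gED r e * gED r e : ℕ):ℝ) + 2*a*b*((gED r e * hED r e : ℕ):ℝ)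
          + b^2 * ((hED r e * hED r e : ℕ):ℝ) := by
      intro e _
      push_cast
      ring
    rw [Finset.sum_congr rfl e1, sum_add_distrib, sum_add_distrib, ← mul_sum, ← mul_sum,
      ← mul_sum, ← Nat.cast_sum, ← Nat.cast_sum, ← Nat.cast_sum, nGG, nGH, nHH]
    push_cast
    ring
  rw [lhs_eq, rhs_eq, hEv, rT4, rT3, hP, hadef, hbdef, hC3v, hC4v] at cs
  -- core claim
  have h8p : (0:ℝ) < 1 + 8*p := by linarith
  have hfac : (0:ℝ) < nR * (nR - 1) * (1 + 8*p) := by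
    have : (0:ℝ) < nR * (nR - 1) := by nlinarith
    exact mul_pos this h8p
  have claim : 0 ≤ (1+8*p) * (Q:ℝ)
      - (3/4)*p^2*(nR*(nR-1)*(nR-2)*(nR-3)) + nR*(nR-1)*(nR-2)*p*(1-p)/4 := by
    by_contra hcon
    push_neg at hcon
    nlinarith [cs, mul_neg_of_pos_of_neg hfac hcon]
  -- endgame
  clear cs lhs_eq rhs_eq nA nB nGG nGH nHH rT3 rT4 hEv nPT nT4 nE
  have hn3 : (0:ℝ) < nR - 3 := by linarith
  have e7 : (3/4)*p^2*(nR*(nR-1)*(nR-2)*(nR-3)) = 18*p^2*C4 := by rw [hC4v]; ring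
  have e6 : nR*(nR-1)*(nR-2)*p*(1-p)/4 = (6*p*(1-p)/(nR-3)) * C4 := by
    rw [hC4v]
    field_simp
    ring
  have claim2 : 18*p^2*C4 - (6*p*(1-p)/(nR-3))*C4 ≤ (1+8*p)*(Q:ℝ) := by
    rw [← e6, ← e7]
    linarith
  have hQC4 : 18*p^2 - 6*p*(1-p)/(nR-3) ≤ (1+8*p) * ((Q:ℝ)/C4) := by
    rw [show (1+8*p) * ((Q:ℝ)/C4) = ((1+8*p) * (Q:ℝ))/C4 by ring]
    rw [le_div_iff₀ hC4pos]
    calc (18*p^2 - 6*p*(1-p)/(nR-3)) * C4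
        = 18*p^2*C4 - (6*p*(1-p)/(nR-3))*C4 := by ring
      _ ≤ (1+8*p)*(Q:ℝ) := claim2
  have herr : 6*p*(1-p)/(nR-3) ≤ ε := by
    have h14 : p*(1-p) ≤ 1/4 := by nlinarith [sq_nonneg (p - 1/2)]
    rw [div_le_iff₀ hn3]
    have h32 : (3:ℝ)/2 ≤ ε * (nR - 3) := by
      have hstep : 3/(2*ε) + 1 ≤ nR - 3 := by linarith
      calc (3:ℝ)/2 = ε * (3/(2*ε)) := by field_simp
        _ ≤ ε * (nR - 3) := by
            apply mul_le_mul_of_nonneg_left _ hε.le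
            linarith
    calc 6*p*(1-p) = 6*(p*(1-p)) := by ring
      _ ≤ 6*(1/4) := by linarith [h14]
      _ ≤ ε * (nR - 3) := by linarith [h32]
  have target2 : 18*p^2/(1+8*p) ≤ (Q:ℝ)/C4 + ε := by
    rw [div_le_iff₀ h8p]
    have hεp : ε ≤ ε*(1+8*p) := by
      have h8 : 0 ≤ ε * (8*p) := mul_nonneg hε.le (by linarith)
      have e8 : ε*(1+8*p) = ε + ε*(8*p) := by ring
      linarith
    have expand : ((Q:ℝ)/C4 + ε)*(1+8*p) = (1+8*p)*((Q:ℝ)/C4) + ε*(1+8*p) := by ring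
    rw [expand]
    linarith [hQC4, herr, hεp]
  rw [ge_iff_le, sub_le_iff_le_add]
  exact target2
end St9


/-- for every `ε > 0` there is `N` such that every tournament on
`n ≥ N` vertices satisfies `c4 ≥ 18·c3²/(1 + 8·c3) − ε`. -/
theorem stmt_9 :
    ∀ ε : ℝ, 0 < ε → ∃ N : ℕ, ∀ n : ℕ, N ≤ n → ∀ r : Fin n → Fin n → Prop,
      IsTournament r →
        (cyc4Count r : ℝ) / (n.choose 4 : ℝ) ≥
          18 * ((cyc3Count r : ℝ) / (n.choose 3 : ℝ)) ^ 2 /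
            (1 + 8 * ((cyc3Count r : ℝ) / (n.choose 3 : ℝ))) - ε :=
  St9.stmt_9'
end

section
/- Let n ≥ 1 and let s be an integer with n/2 ≤ s ≤ n. Define a tournament T on vertex set {1,2,…,n} by: for 1 ≤ x < y ≤ n, x→y if and only if y ≤ x+s, and y→x otherwise. Then for every 3-element subset {x,y,z} spanning a cyclic triangle (x→y→z→x) and every vertex w ∉ {x,y,z}, it is not the case that w→x, w→y and w→z, and it is not the case that x→w, y→w and z→w. Equivalently, every 4-element vertex subset of T either spans a transitive subtournament or contains a directed 4-cycle. -/
open Finset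

section Aux
variable {n s : ℕ} {r : Fin n → Fin n → Prop}

lemma myChar (hs1 : n ≤ 2 * s)
    (hr : ∀ x y : Fin n, x.val < y.val → (r x y ↔ y.val ≤ x.val + s))
    (hr' : ∀ x y : Fin n, x.val < y.val → (r y x ↔ ¬ y.val ≤ x.val + s)) :
    ∀ u v : Fin n, u ≠ v →
      (r u v ↔ ((u:ℕ) < v ∧ (v:ℕ) ≤ (u:ℕ) + s) ∨ ((v:ℕ) < u ∧ (v:ℕ) + s < (u:ℕ))) := by
  intro u v huv
  rcases Nat.lt_trichotomy u.val v.val with h | h | h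
  · rw [hr u v h]; omega
  · exact absurd (Fin.ext h) huv
  · rw [hr' v u h]; omega

variable (hs1 : n ≤ 2 * s)
  (hc : ∀ u v : Fin n, u ≠ v →
    (r u v ↔ ((u:ℕ) < v ∧ (v:ℕ) ≤ (u:ℕ) + s) ∨ ((v:ℕ) < u ∧ (v:ℕ) + s < (u:ℕ))))

include hs1 hc

lemma myTot (u v : Fin n) (huv : u ≠ v) : r u v ∨ r v u := by
  have hval : (u:ℕ) ≠ (v:ℕ) := fun h => huv (Fin.ext h)
  rw [hc u v huv, hc v u huv.symm]
  omega

lemma partA (x y z w : Fin n) (hxy : x ≠ y) (hyz : y ≠ z) (hxz : x ≠ z)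
    (hwx : w ≠ x) (hwy : w ≠ y) (hwz : w ≠ z)
    (h1 : r x y) (h2 : r y z) (h3 : r z x) :
    ¬(r w x ∧ r w y ∧ r w z) ∧ ¬(r x w ∧ r y w ∧ r z w) := by
  rw [hc x y hxy] at h1
  rw [hc y z hyz] at h2
  rw [hc z x (Ne.symm hxz)] at h3
  have bx := x.isLt; have by' := y.isLt; have bz := z.isLt; have bw := w.isLt
  constructor
  · rintro ⟨a1, a2, a3⟩
    rw [hc w x hwx] at a1; rw [hc w y hwy] at a2; rw [hc w z hwz] at a3
    omega
  · rintro ⟨a1, a2, a3⟩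
    rw [hc x w (Ne.symm hwx)] at a1; rw [hc y w (Ne.symm hwy)] at a2
    rw [hc z w (Ne.symm hwz)] at a3
    omega

set_option maxHeartbeats 1000000 in
lemma partB (S : Finset (Fin n)) (w x y z : Fin n)
    (hwx : w ≠ x) (hwy : w ≠ y) (hwz : w ≠ z)
    (hxy : x ≠ y) (hyz : y ≠ z) (hxz : x ≠ z)
    (hS : S = {w, x, y, z})
    (h1 : r x y) (h2 : r y z) (h3 : r z x) : HasCycle4 r S := by
  obtain ⟨hA1, hA2⟩ := partA hs1 hc x y z w hxy hyz hxz hwx hwy hwz h1 h2 h3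
  have e1 : S = {w, y, z, x} := by
    rw [hS]; ext t; simp only [Finset.mem_insert, Finset.mem_singleton]; tauto
  have e2 : S = {w, z, x, y} := by
    rw [hS]; ext t; simp only [Finset.mem_insert, Finset.mem_singleton]; tauto
  rcases myTot hs1 hc w x hwx with c1 | c1 <;>
    rcases myTot hs1 hc w y hwy with c2 | c2 <;>
      rcases myTot hs1 hc w z hwz with c3 | c3
  -- w→x w→y w→z : forbidden
  · exact absurd ⟨c1, c2, c3⟩ hA1
  -- w→x w→y z→w : cycle w x y z
  · exact ⟨w, x, y, z, hwx, hwy, hwz, hxy, hxz, hyz, hS, c1, h1, h2, c3⟩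
  -- w→x y→w w→z : cycle w z x y
  · exact ⟨w, z, x, y, hwz, hwx, hwy, Ne.symm hxz, Ne.symm hyz, hxy, e2, c3, h3, h1, c2⟩
  -- w→x y→w z→w : cycle w x y z
  · exact ⟨w, x, y, z, hwx, hwy, hwz, hxy, hxz, hyz, hS, c1, h1, h2, c3⟩
  -- x→w w→y w→z : cycle w y z x
  · exact ⟨w, y, z, x, hwy, hwz, hwx, hyz, Ne.symm hxy, Ne.symm hxz, e1, c2, h2, h3, c1⟩
  -- x→w w→y z→w : cycle w y z x
  · exact ⟨w, y, z, x, hwy, hwz, hwx, hyz, Ne.symm hxy, Ne.symm hxz, e1, c2, h2, h3, c1⟩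
  -- x→w y→w w→z : cycle w z x y
  · exact ⟨w, z, x, y, hwz, hwx, hwy, Ne.symm hxz, Ne.symm hyz, hxy, e2, c3, h3, h1, c2⟩
  -- x→w y→w z→w : forbidden
  · exact absurd ⟨c1, c2, c3⟩ hA2

lemma partC (S : Finset (Fin n)) (x y z d : Fin n)
    (hxy : x ≠ y) (hyz : y ≠ z) (hxz : x ≠ z)
    (hxd : x ≠ d) (hyd : y ≠ d) (hzd : z ≠ d)
    (hS : S = {x, y, z, d})
    (h1 : r x y) (h2 : r y z) (h3 : r x z) :
    IsTrans4 r S ∨ HasCycle4 r S := by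
  have p1 : S = {d, x, y, z} := by
    rw [hS]; ext t; simp only [Finset.mem_insert, Finset.mem_singleton]; tauto
  have p2 : S = {z, x, y, d} := by
    rw [hS]; ext t; simp only [Finset.mem_insert, Finset.mem_singleton]; tauto
  have p3 : S = {x, d, y, z} := by
    rw [hS]; ext t; simp only [Finset.mem_insert, Finset.mem_singleton]; tauto
  have p4 : S = {x, y, d, z} := by
    rw [hS]; ext t; simp only [Finset.mem_insert, Finset.mem_singleton]; tauto
  rcases myTot hs1 hc d x (Ne.symm hxd) with c1 | c1 <;>
    rcases myTot hs1 hc d y (Ne.symm hyd) with c2 | c2 <;>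
      rcases myTot hs1 hc d z (Ne.symm hzd) with c3 | c3
  -- d→x d→y d→z : trans d x y z
  · exact Or.inl ⟨d, x, y, z, Ne.symm hxd, Ne.symm hyd, Ne.symm hzd, hxy, hxz, hyz,
      p1, c1, c2, c3, h1, h3, h2⟩
  -- d→x d→y z→d : cycle with triple y→z→d→y, w = x
  · exact Or.inr (partB hs1 hc S x y z d hxy hxz hxd hyz hzd hyd hS h2 c3 c2)
  -- d→x y→d d→z : triple x→y→d→x, w = z
  · exact Or.inr (partB hs1 hc S z x y d (Ne.symm hxz) (Ne.symm hyz) hzd hxy hyd hxd p2 h1 c2 c1)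
  -- d→x y→d z→d : triple x→y→d→x, w = z
  · exact Or.inr (partB hs1 hc S z x y d (Ne.symm hxz) (Ne.symm hyz) hzd hxy hyd hxd p2 h1 c2 c1)
  -- x→d d→y d→z : trans x d y z
  · exact Or.inl ⟨x, d, y, z, hxd, hxy, hxz, Ne.symm hyd, Ne.symm hzd, hyz,
      p3, c1, h1, h3, c2, c3, h2⟩
  -- x→d d→y z→d : triple y→z→d→y, w = x
  · exact Or.inr (partB hs1 hc S x y z d hxy hxz hxd hyz hzd hyd hS h2 c3 c2)
  -- x→d y→d d→z : trans x y d z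
  · exact Or.inl ⟨x, y, d, z, hxy, hxd, hxz, hyd, hyz, Ne.symm hzd,
      p4, h1, c1, h3, c2, h2, c3⟩
  -- x→d y→d z→d : trans x y z d
  · exact Or.inl ⟨x, y, z, d, hxy, hxz, hxd, hyz, hyd, hzd, hS, h1, h3, c1, h2, c2, c3⟩

end Aux

/-- for `n/2 ≤ s ≤ n`, the tournament on `{1,…,n}` (here `Fin n`)
with `x→y` iff `y ≤ x+s` (for `x < y`), and `y→x` otherwise, has the property that
no cyclic triangle has a common in-neighbour or common out-neighbour; equivalently,
every 4-element vertex subset spans a transitive subtournament or contains a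
directed 4-cycle. -/
theorem stmt_11 {n s : ℕ} (hn : 1 ≤ n) (hs1 : n ≤ 2 * s) (hs2 : s ≤ n)
    (r : Fin n → Fin n → Prop)
    (hr : ∀ x y : Fin n, x.val < y.val → (r x y ↔ y.val ≤ x.val + s))
    (hr' : ∀ x y : Fin n, x.val < y.val → (r y x ↔ ¬ y.val ≤ x.val + s)) :
    (∀ x y z w : Fin n, x ≠ y → y ≠ z → x ≠ z → r x y → r y z → r z x →
      w ≠ x → w ≠ y → w ≠ z →
        ¬(r w x ∧ r w y ∧ r w z) ∧ ¬(r x w ∧ r y w ∧ r z w)) ∧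
    (∀ S : Finset (Fin n), S.card = 4 → IsTrans4 r S ∨ HasCycle4 r S) := by
  have hc := myChar hs1 hr hr'
  constructor
  · intro x y z w hxy hyz hxz h1 h2 h3 hwx hwy hwz
    exact partA hs1 hc x y z w hxy hyz hxz hwx hwy hwz h1 h2 h3
  · intro S hS4
    obtain ⟨a, ha⟩ : ∃ a, a ∈ S := (Finset.card_pos.mp (by omega)).exists_mem
    have h3' : (S.erase a).card = 3 := by
      rw [Finset.card_erase_of_mem ha, hS4]
    obtain ⟨b, c, d, hbc, hbd, hcd, he⟩ := Finset.card_eq_three.mp h3'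
    have hS : S = {a, b, c, d} := by
      rw [← Finset.insert_erase ha, he]
    have hna : a ∉ ({b, c, d} : Finset (Fin n)) := by
      rw [← he]; exact Finset.notMem_erase a S
    simp only [Finset.mem_insert, Finset.mem_singleton, not_or] at hna
    obtain ⟨hab, hac, had⟩ := hna
    have hda : d ≠ a := Ne.symm had
    have hdb : d ≠ b := Ne.symm hbd
    have hdc : d ≠ c := Ne.symm hcd
    rcases myTot hs1 hc a b hab with e1 | e1 <;>
      rcases myTot hs1 hc b c hbc with e2 | e2 <;>
        rcases myTot hs1 hc a c hac with e3 | e3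
    · exact partC hs1 hc S a b c d hab hbc hac had hbd hcd hS e1 e2 e3
    · refine Or.inr (partB hs1 hc S d a b c hda hdb hdc hab hbc hac ?_ e1 e2 e3)
      rw [hS]; ext t; simp only [Finset.mem_insert, Finset.mem_singleton]; tauto
    · refine partC hs1 hc S a c b d hac (Ne.symm hbc) hab had hcd hbd ?_ e3 e2 e1
      rw [hS]; ext t; simp only [Finset.mem_insert, Finset.mem_singleton]; tauto
    · refine partC hs1 hc S c a b d (Ne.symm hac) hab (Ne.symm hbc) hcd had hbd ?_ e3 e1 e2
      rw [hS]; ext t; simp only [Finset.mem_insert, Finset.mem_singleton]; tauto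
    · refine partC hs1 hc S b a c d (Ne.symm hab) hac hbc hbd had hcd ?_ e1 e3 e2
      rw [hS]; ext t; simp only [Finset.mem_insert, Finset.mem_singleton]; tauto
    · refine partC hs1 hc S b c a d hbc (Ne.symm hac) (Ne.symm hab) hbd hcd had ?_ e2 e3 e1
      rw [hS]; ext t; simp only [Finset.mem_insert, Finset.mem_singleton]; tauto
    · refine Or.inr (partB hs1 hc S d a c b hda hdc hdb hac (Ne.symm hbc) hab ?_ e3 e2 e1)
      rw [hS]; ext t; simp only [Finset.mem_insert, Finset.mem_singleton]; tauto
    · refine partC hs1 hc S c b a d (Ne.symm hbc) (Ne.symm hab) (Ne.symm hac) hcd hbd had ?_ e2 e1 e3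
      rw [hS]; ext t; simp only [Finset.mem_insert, Finset.mem_singleton]; tauto
end

section
/- Let x, y be real numbers with y > 0 and x ≥ (1+√5)·y. Then there exist real numbers s ≥ t ≥ 0 such that s + t = x + 2y, s³ + t³ = x³ + 2y³, and s⁴ + t⁴ < x⁴ + 2y⁴. -/
/-- for `y > 0` and `x ≥ (1+√5)·y` there are `s ≥ t ≥ 0` with
`s + t = x + 2y`, `s³ + t³ = x³ + 2y³` and `s⁴ + t⁴ < x⁴ + 2y⁴`. -/
theorem stmt_12 (x y : ℝ) (hy : 0 < y) (hx : (1 + Real.sqrt 5) * y ≤ x) :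
    ∃ s t : ℝ, t ≤ s ∧ 0 ≤ t ∧ s + t = x + 2 * y ∧
      s ^ 3 + t ^ 3 = x ^ 3 + 2 * y ^ 3 ∧ s ^ 4 + t ^ 4 < x ^ 4 + 2 * y ^ 4 := by
  have h5 : Real.sqrt 5 ^ 2 = 5 := Real.sq_sqrt (by norm_num)
  have h5pos : 0 < Real.sqrt 5 := Real.sqrt_pos.mpr (by norm_num)
  have hx0 : 0 < x := lt_of_lt_of_le (by positivity) hx
  set p : ℝ := x + 2 * y with hp_def
  have hp : 0 < p := by positivity
  set E : ℝ := x ^ 3 - 2 * x ^ 2 * y - 4 * x * y ^ 2 with hE_def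
  have hE : 0 ≤ E := by
    rw [hE_def]
    have h1 : 0 ≤ x - (1 + Real.sqrt 5) * y := sub_nonneg.mpr hx
    have h2 : 0 ≤ x + (Real.sqrt 5 - 1) * y := by nlinarith
    have hq : 0 ≤ x ^ 2 - 2 * x * y - 4 * y ^ 2 := by
      nlinarith [mul_nonneg h1 h2, sq_nonneg y, h5]
    nlinarith [mul_nonneg hq hx0.le]
  set D : ℝ := E / p with hD_def
  have hD : 0 ≤ D := div_nonneg hE hp.le
  set r : ℝ := Real.sqrt D with hr_def
  have hr0 : 0 ≤ r := Real.sqrt_nonneg _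
  have hr2 : r ^ 2 = D := Real.sq_sqrt hD
  have hrp : r ^ 2 * p = E := by
    rw [hr2, hD_def, div_mul_cancel₀ _ hp.ne']
  have hEp : E ≤ p ^ 3 := by rw [hE_def, hp_def]; nlinarith [sq_nonneg (x + y), hy]
  have hrle : r ≤ p := by
    have hDp : D ≤ p ^ 2 := by
      rw [hD_def, div_le_iff₀ hp]; nlinarith
    calc r = Real.sqrt D := hr_def
    _ ≤ Real.sqrt (p ^ 2) := Real.sqrt_le_sqrt hDp
    _ = p := by rw [Real.sqrt_sq hp.le]
  refine ⟨(p + r) / 2, (p - r) / 2, by linarith, by linarith, by rw [hp_def]; ring, ?_, ?_⟩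
  · linear_combination (3 / 4 : ℝ) * hrp
  · have key : (x ^ 4 + 2 * y ^ 4 - (((p + r) / 2) ^ 4 + ((p - r) / 2) ^ 4)) * p ^ 2
        = 8 * x * y ^ 5 + 18 * x ^ 2 * y ^ 4 + 8 * x ^ 3 * y ^ 3 := by
      linear_combination ((-6 * p ^ 3 - r ^ 2 * p - E) / 8) * hrp
    have h8 : 0 < 8 * x * y ^ 5 + 18 * x ^ 2 * y ^ 4 + 8 * x ^ 3 * y ^ 3 := by positivity
    nlinarith [key, h8, sq_nonneg p, hp]
end

section
/- Let x, y be real numbers with x > y > 0 and y ≥ ((√5−1)/4)·x. Then there exist real numbers s ≥ t ≥ 0 such that 2s + t = x + 2y, 2s³ + t³ = x³ + 2y³, and 2s⁴ + t⁴ < x⁴ + 2y⁴. Moreover one may take s = (2x + 3y − √(y(4x+5y)))/2 and t = x + 2y − 2s. -/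
set_option maxHeartbeats 1000000


/-- for `x > y > 0` with `y ≥ ((√5−1)/4)·x` there are `s ≥ t ≥ 0` with
`2s + t = x + 2y`, `2s³ + t³ = x³ + 2y³` and `2s⁴ + t⁴ < x⁴ + 2y⁴`; moreover one may
take `s = (2x + 3y − √(y(4x+5y)))/2` and `t = x + 2y − 2s`. -/
theorem stmt_13 (x y : ℝ) (hxy : y < x) (hy : 0 < y)
    (hlb : ((Real.sqrt 5 - 1) / 4) * x ≤ y) :
    ∃ s t : ℝ, t ≤ s ∧ 0 ≤ t ∧ 2 * s + t = x + 2 * y ∧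
      2 * s ^ 3 + t ^ 3 = x ^ 3 + 2 * y ^ 3 ∧
      2 * s ^ 4 + t ^ 4 < x ^ 4 + 2 * y ^ 4 ∧
      s = (2 * x + 3 * y - Real.sqrt (y * (4 * x + 5 * y))) / 2 ∧
      t = x + 2 * y - 2 * s := by
  have hx : 0 < x := lt_trans hy hxy
  set r : ℝ := Real.sqrt (y * (4 * x + 5 * y)) with hrdef
  have hqpos : 0 < y * (4 * x + 5 * y) := by positivity
  have hr0 : 0 < r := Real.sqrt_pos.mpr hqpos
  have hr2 : r ^ 2 = y * (4 * x + 5 * y) := Real.sq_sqrt hqpos.le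
  have h5 : Real.sqrt 5 ^ 2 = 5 := Real.sq_sqrt (by norm_num)
  have h5nn : 0 ≤ Real.sqrt 5 := Real.sqrt_nonneg 5
  have h5gt2 : (2:ℝ) < Real.sqrt 5 := by nlinarith
  -- lower bound : x + y ≤ r
  have hrlb : x + y ≤ r := by
    have h1 : (x + y) ^ 2 ≤ y * (4 * x + 5 * y) := by
      have h5x : Real.sqrt 5 ^ 2 * x ^ 2 = 5 * x ^ 2 := by rw [h5]
      nlinarith [h5x, mul_nonneg (by linarith : (0:ℝ) ≤ 4 * y - (Real.sqrt 5 - 1) * x)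
        (by nlinarith : (0:ℝ) ≤ 4 * y + (Real.sqrt 5 + 1) * x)]
    calc x + y = Real.sqrt ((x + y) ^ 2) := (Real.sqrt_sq (by linarith)).symm
      _ ≤ r := Real.sqrt_le_sqrt h1
  -- upper bound : 3r < 4x + 5y
  have hrub : 3 * r < 4 * x + 5 * y := by
    nlinarith [hr2, hr0]
  refine ⟨(2 * x + 3 * y - r) / 2, x + 2 * y - 2 * ((2 * x + 3 * y - r) / 2),
    ?_, ?_, by ring, ?_, ?_, rfl, rfl⟩
  · linarith
  · linarith
  · linear_combination (3 / 4 * r - 3 / 4 * y - 3 / 2 * x) * hr2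
  · obtain ⟨C, hC⟩ : ∃ C : ℝ, C = -2 * x ^ 4 - 52 * x ^ 3 * y - 180 * x ^ 2 * y ^ 2
      - 232 * x * y ^ 3 - 101 * y ^ 4 := ⟨_, rfl⟩
    obtain ⟨D, hD⟩ : ∃ D : ℝ, D = 8 * x ^ 3 + 50 * x ^ 2 * y + 86 * x * y ^ 2 + 45 * y ^ 3 :=
      ⟨_, rfl⟩
    have hDpos : 0 < D := by rw [hD]; positivity
    have hE : x ^ 4 + 2 * y ^ 4 - (2 * ((2 * x + 3 * y - r) / 2) ^ 4
        + (x + 2 * y - 2 * ((2 * x + 3 * y - r) / 2)) ^ 4) = C + D * r := by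
      rw [hC, hD]
      linear_combination (-(9 / 8) * r ^ 2 + 11 / 2 * y * r + 5 * x * r
        - 147 / 8 * y ^ 2 - 51 / 2 * x * y - 9 * x ^ 2) * hr2
    have hxlt : x < 9 * y := by nlinarith
    have hH : 0 < -4 * x ^ 5 + 36 * x ^ 4 * y + 216 * x ^ 3 * y ^ 2
        + 392 * x ^ 2 * y ^ 3 + 292 * x * y ^ 4 + 76 * y ^ 5 := by
      nlinarith [mul_pos (pow_pos hx 4) (show (0:ℝ) < 9 * y - x by linarith),
        mul_pos (pow_pos hx 3) (pow_pos hy 2), mul_pos (pow_pos hx 2) (pow_pos hy 3),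
        mul_pos hx (pow_pos hy 4), pow_pos hy 5]
    have hW : C ^ 2 < D ^ 2 * (y * (4 * x + 5 * y)) := by
      have key : D ^ 2 * (y * (4 * x + 5 * y)) - C ^ 2 = (x - y) ^ 3
          * (-4 * x ^ 5 + 36 * x ^ 4 * y + 216 * x ^ 3 * y ^ 2
            + 392 * x ^ 2 * y ^ 3 + 292 * x * y ^ 4 + 76 * y ^ 5) := by
        rw [hC, hD]; ring
      linarith [key, mul_pos (pow_pos (by linarith : (0:ℝ) < x - y) 3) hH]
    have hDr : 0 < D * r := mul_pos hDpos hr0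
    have h1 : C ^ 2 < (D * r) ^ 2 := by rw [mul_pow, hr2]; exact hW
    have h2 : |C| ^ 2 < (D * r) ^ 2 := by rwa [sq_abs]
    have habs : |C| < D * r := lt_of_pow_lt_pow_left₀ 2 hDr.le h2
    have hpos : 0 < C + D * r := by linarith [neg_abs_le C, habs]
    linarith [hE, hpos]
end

section
/- For all real numbers x, y the polynomial identity y(4x+5y)(8x³+50x²y+86xy²+45y³)² − (2x⁴+52x³y+180x²y²+232xy³+101y⁴)² = 4(x−y)³(19y⁵+73xy⁴+98x²y³+54x³y²+9x⁴y−x⁵) holds. Consequently, if x > y > 0 and y ≥ ((√5−1)/4)·x, then (8x³+50x²y+86xy²+45y³)·√(y(4x+5y)) > 2x⁴+52x³y+180x²y²+232xy³+101y⁴. -/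
/-- the polynomial identity
`y(4x+5y)(8x³+50x²y+86xy²+45y³)² − (2x⁴+52x³y+180x²y²+232xy³+101y⁴)²
  = 4(x−y)³(19y⁵+73xy⁴+98x²y³+54x³y²+9x⁴y−x⁵)`
holds for all reals; consequently, for `x > y > 0` with `y ≥ ((√5−1)/4)·x`,
`(8x³+50x²y+86xy²+45y³)·√(y(4x+5y)) > 2x⁴+52x³y+180x²y²+232xy³+101y⁴`. -/
theorem stmt_15 :
    (∀ x y : ℝ,
      y * (4 * x + 5 * y) * (8 * x ^ 3 + 50 * x ^ 2 * y + 86 * x * y ^ 2 + 45 * y ^ 3) ^ 2 -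
          (2 * x ^ 4 + 52 * x ^ 3 * y + 180 * x ^ 2 * y ^ 2 + 232 * x * y ^ 3 +
            101 * y ^ 4) ^ 2 =
        4 * (x - y) ^ 3 *
          (19 * y ^ 5 + 73 * x * y ^ 4 + 98 * x ^ 2 * y ^ 3 + 54 * x ^ 3 * y ^ 2 +
            9 * x ^ 4 * y - x ^ 5)) ∧
    (∀ x y : ℝ, y < x → 0 < y → ((Real.sqrt 5 - 1) / 4) * x ≤ y →
      (8 * x ^ 3 + 50 * x ^ 2 * y + 86 * x * y ^ 2 + 45 * y ^ 3) *
          Real.sqrt (y * (4 * x + 5 * y)) >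
        2 * x ^ 4 + 52 * x ^ 3 * y + 180 * x ^ 2 * y ^ 2 + 232 * x * y ^ 3 +
          101 * y ^ 4) := by
  constructor
  · intro x y; ring
  · intro x y hxy hy hge
    have hx : 0 < x := hy.trans hxy
    have h5 : (Real.sqrt 5) ^ 2 = 5 := Real.sq_sqrt (by norm_num)
    have hs5 : Real.sqrt 5 ≥ 0 := Real.sqrt_nonneg 5
    have h5gt : Real.sqrt 5 > 2.2 := by nlinarith
    have hy9 : 9 * y > x := by nlinarith
    have harg : 0 ≤ y * (4 * x + 5 * y) := by positivity
    set s := Real.sqrt (y * (4 * x + 5 * y)) with hsdef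
    have hs0 : 0 ≤ s := Real.sqrt_nonneg _
    have hs2 : s ^ 2 = y * (4 * x + 5 * y) := Real.sq_sqrt harg
    have hA : 0 < 8 * x ^ 3 + 50 * x ^ 2 * y + 86 * x * y ^ 2 + 45 * y ^ 3 := by positivity
    have hB : 0 < 2 * x ^ 4 + 52 * x ^ 3 * y + 180 * x ^ 2 * y ^ 2 + 232 * x * y ^ 3 +
        101 * y ^ 4 := by positivity
    have hpos : 0 < 19 * y ^ 5 + 73 * x * y ^ 4 + 98 * x ^ 2 * y ^ 3 + 54 * x ^ 3 * y ^ 2 +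
        9 * x ^ 4 * y - x ^ 5 := by
      nlinarith [mul_pos (pow_pos hx 4) (show (0:ℝ) < 9 * y - x by linarith),
        mul_pos (pow_pos hy 5) hy, mul_pos (mul_pos hx (pow_pos hy 4)) hy,
        mul_pos (mul_pos (pow_pos hx 2) (pow_pos hy 3)) hy,
        mul_pos (mul_pos (pow_pos hx 3) (pow_pos hy 2)) hy]
    have hcube : 0 < (x - y) ^ 3 := pow_pos (by linarith) 3
    have expand : ((8 * x ^ 3 + 50 * x ^ 2 * y + 86 * x * y ^ 2 + 45 * y ^ 3) * s) ^ 2 -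
        (2 * x ^ 4 + 52 * x ^ 3 * y + 180 * x ^ 2 * y ^ 2 + 232 * x * y ^ 3 + 101 * y ^ 4) ^ 2 =
        4 * (x - y) ^ 3 *
          (19 * y ^ 5 + 73 * x * y ^ 4 + 98 * x ^ 2 * y ^ 3 + 54 * x ^ 3 * y ^ 2 +
            9 * x ^ 4 * y - x ^ 5) := by
      rw [mul_pow, hs2]; ring
    have key : ((8 * x ^ 3 + 50 * x ^ 2 * y + 86 * x * y ^ 2 + 45 * y ^ 3) * s) ^ 2 >
        (2 * x ^ 4 + 52 * x ^ 3 * y + 180 * x ^ 2 * y ^ 2 + 232 * x * y ^ 3 + 101 * y ^ 4) ^ 2 := by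
      nlinarith [mul_pos hcube hpos]
    nlinarith [mul_nonneg (le_of_lt hA) hs0, key, hB]
end

section
/- Fix 0 < C < 1. Let w = (w₁,…,w_m) be a vector of positive reals with Σᵢ wᵢ = 1 and Σᵢ wᵢ³ = C, and suppose w minimizes the sum of fourth powers among all such vectors: for every k and every vector v = (v₁,…,v_k) of positive reals with Σᵢ vᵢ = 1 and Σᵢ vᵢ³ = C, one has Σᵢ wᵢ⁴ ≤ Σᵢ vᵢ⁴. Then there exist reals a ≥ b > 0 such that at least m−1 of the coordinates of w equal a and any remaining coordinate equals b. -/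
/-- Vieta: a monic cubic with three distinct roots has coefficients given by the
elementary symmetric functions of the roots. -/
private lemma vieta3 (r1 r2 r3 e1 e2 e3 : ℝ) (h12 : r1 ≠ r2) (h13 : r1 ≠ r3) (h23 : r2 ≠ r3)
    (H1 : r1 ^ 3 - e1 * r1 ^ 2 + e2 * r1 - e3 = 0)
    (H2 : r2 ^ 3 - e1 * r2 ^ 2 + e2 * r2 - e3 = 0)
    (H3 : r3 ^ 3 - e1 * r3 ^ 2 + e2 * r3 - e3 = 0) :
    r1 + r2 + r3 = e1 ∧ r1 * r2 + r1 * r3 + r2 * r3 = e2 ∧ r1 * r2 * r3 = e3 := by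
  have G1 : ((r1 + r2 + r3) - e1) * r1 ^ 2 - ((r1 * r2 + r1 * r3 + r2 * r3) - e2) * r1
      + (r1 * r2 * r3 - e3) = 0 := by linear_combination H1
  have G2 : ((r1 + r2 + r3) - e1) * r2 ^ 2 - ((r1 * r2 + r1 * r3 + r2 * r3) - e2) * r2
      + (r1 * r2 * r3 - e3) = 0 := by linear_combination H2
  have G3 : ((r1 + r2 + r3) - e1) * r3 ^ 2 - ((r1 * r2 + r1 * r3 + r2 * r3) - e2) * r3
      + (r1 * r2 * r3 - e3) = 0 := by linear_combination H3
  have E12 : (r1 - r2) * (((r1 + r2 + r3) - e1) * (r1 + r2)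
      - ((r1 * r2 + r1 * r3 + r2 * r3) - e2)) = 0 := by linear_combination G1 - G2
  have E13 : (r1 - r3) * (((r1 + r2 + r3) - e1) * (r1 + r3)
      - ((r1 * r2 + r1 * r3 + r2 * r3) - e2)) = 0 := by linear_combination G1 - G3
  have h12' : r1 - r2 ≠ 0 := sub_ne_zero.mpr h12
  have h13' : r1 - r3 ≠ 0 := sub_ne_zero.mpr h13
  have h23' : r2 - r3 ≠ 0 := sub_ne_zero.mpr h23
  have E12' : ((r1 + r2 + r3) - e1) * (r1 + r2)
      - ((r1 * r2 + r1 * r3 + r2 * r3) - e2) = 0 :=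
    (mul_eq_zero.1 E12).resolve_left h12'
  have E13' : ((r1 + r2 + r3) - e1) * (r1 + r3)
      - ((r1 * r2 + r1 * r3 + r2 * r3) - e2) = 0 :=
    (mul_eq_zero.1 E13).resolve_left h13'
  have EA : ((r1 + r2 + r3) - e1) * (r2 - r3) = 0 := by linear_combination E12' - E13'
  have hA : (r1 + r2 + r3) - e1 = 0 := (mul_eq_zero.1 EA).resolve_right h23'
  have hB : (r1 * r2 + r1 * r3 + r2 * r3) - e2 = 0 := by linear_combination (r1 + r2) * hA - E12'
  have hC : r1 * r2 * r3 - e3 = 0 := by linear_combination G1 - r1 ^ 2 * hA + r1 * hB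
  exact ⟨by linarith, by linarith, by linarith⟩

set_option maxHeartbeats 1000000 in
/-- Key perturbation lemma: any positive triple `x ≤ y < z` can be replaced by a positive
triple with the same sum and sum of cubes, but strictly smaller sum of fourth powers. -/
private lemma key_triple (x y z : ℝ) (hx : 0 < x) (hy : 0 < y) (hz : 0 < z)
    (hxy : x ≤ y) (hyz : y < z) :
    ∃ r1 r2 r3 : ℝ, 0 < r1 ∧ 0 < r2 ∧ 0 < r3 ∧
      r1 + r2 + r3 = x + y + z ∧ r1 ^ 3 + r2 ^ 3 + r3 ^ 3 = x ^ 3 + y ^ 3 + z ^ 3 ∧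
      r1 ^ 4 + r2 ^ 4 + r3 ^ 4 < x ^ 4 + y ^ 4 + z ^ 4 := by
  set e1 : ℝ := x + y + z with he1
  set e2 : ℝ := x * y + x * z + y * z with he2
  set e3 : ℝ := x * y * z with he3
  set m0 : ℝ := (y + z) / 2 with hm0
  have he1pos : 0 < e1 := by simp only [he1]; linarith
  have he2pos : 0 < e2 := by simp only [he2]; nlinarith
  have he3pos : 0 < e3 := by simp only [he3]; positivity
  have hm0x : x < m0 := by simp only [hm0]; linarith
  have hm0y : y < m0 := by simp only [hm0]; linarith
  have hm0z : m0 < z := by simp only [hm0]; linarith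
  have hm0e1 : m0 < e1 := by simp only [hm0, he1]; linarith
  have hm0pos : 0 < m0 := by simp only [hm0]; linarith
  set δ : ℝ := (m0 - x) * (m0 - y) * (z - m0) with hδ
  have hδpos : 0 < δ := by
    apply mul_pos (mul_pos _ _) <;> linarith
  have hd1 : 0 < e1 - m0 := by linarith
  set ε : ℝ := min (e3 / (2 * e1)) (min (δ / (2 * (e1 - m0))) e2) with hε
  have hεpos : 0 < ε := by
    rw [hε]
    apply lt_min (div_pos he3pos (by linarith)) (lt_min (div_pos hδpos (by linarith)) he2pos)
  have hεa : ε ≤ e3 / (2 * e1) := by rw [hε]; exact min_le_left _ _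
  have hεb : ε ≤ δ / (2 * (e1 - m0)) := by
    rw [hε]; exact le_trans (min_le_right _ _) (min_le_left _ _)
  have hεe2 : ε ≤ e2 := by rw [hε]; exact le_trans (min_le_right _ _) (min_le_right _ _)
  have hε1 : ε * e1 ≤ e3 / 2 := by
    have h := mul_le_mul_of_nonneg_right hεa he1pos.le
    have h2 : e3 / (2 * e1) * e1 = e3 / 2 := by
      field_simp
    linarith
  have hε2 : ε * (e1 - m0) ≤ δ / 2 := by
    have h := mul_le_mul_of_nonneg_right hεb hd1.le
    have h2 : δ / (2 * (e1 - m0)) * (e1 - m0) = δ / 2 := by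
      field_simp
    linarith
  clear_value ε δ m0 e3 e2 e1
  clear hε hεa hεb
  -- the perturbed cubic
  set Q : ℝ → ℝ := fun t => (t - x) * (t - y) * (t - z) - ε * (t - e1) with hQ
  have hQcont : Continuous Q := by
    simp only [hQ]; fun_prop
  have hQ0 : Q 0 < 0 := by
    have h : Q 0 = -e3 + ε * e1 := by simp only [hQ, he3]; ring
    rw [h]; linarith
  have hQy : 0 < Q y := by
    have : Q y = ε * (e1 - y) := by simp only [hQ]; ring
    rw [this]
    have : 0 < e1 - y := by simp only [he1]; linarith
    positivity
  have hQm : Q m0 < 0 := by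
    have : Q m0 = -δ + ε * (e1 - m0) := by simp only [hQ, hδ]; ring
    rw [this]; linarith
  have hQe1 : 0 < Q e1 := by
    have : Q e1 = (e1 - x) * (e1 - y) * (e1 - z) := by simp only [hQ]; ring
    rw [this]
    have h1 : 0 < e1 - x := by simp only [he1]; linarith
    have h2 : 0 < e1 - y := by simp only [he1]; linarith
    have h3 : 0 < e1 - z := by simp only [he1]; linarith
    positivity
  -- three roots by the intermediate value theorem
  obtain ⟨r1, hr1mem, hr1⟩ : ∃ r ∈ Set.Ioo (0 : ℝ) y, Q r = 0 := by
    have h := intermediate_value_Ioo (le_of_lt hy) hQcont.continuousOn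
    have : (0 : ℝ) ∈ Set.Ioo (Q 0) (Q y) := ⟨hQ0, hQy⟩
    obtain ⟨r, hr, hr'⟩ := h this
    exact ⟨r, hr, hr'⟩
  obtain ⟨r2, hr2mem, hr2⟩ : ∃ r ∈ Set.Ioo y m0, Q r = 0 := by
    have h := intermediate_value_Ioo' (le_of_lt hm0y) hQcont.continuousOn
    have : (0 : ℝ) ∈ Set.Ioo (Q m0) (Q y) := ⟨hQm, hQy⟩
    obtain ⟨r, hr, hr'⟩ := h this
    exact ⟨r, hr, hr'⟩
  obtain ⟨r3, hr3mem, hr3⟩ : ∃ r ∈ Set.Ioo m0 e1, Q r = 0 := by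
    have h := intermediate_value_Ioo (le_of_lt hm0e1) hQcont.continuousOn
    have : (0 : ℝ) ∈ Set.Ioo (Q m0) (Q e1) := ⟨hQm, hQe1⟩
    obtain ⟨r, hr, hr'⟩ := h this
    exact ⟨r, hr, hr'⟩
  obtain ⟨hr1a, hr1b⟩ := hr1mem
  obtain ⟨hr2a, hr2b⟩ := hr2mem
  obtain ⟨hr3a, hr3b⟩ := hr3mem
  have h12 : r1 ≠ r2 := by intro h; rw [h] at hr1b; linarith
  have h13 : r1 ≠ r3 := by intro h; rw [h] at hr1b; linarith
  have h23 : r2 ≠ r3 := by intro h; rw [h] at hr2b; linarith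
  -- Vieta
  have HQ : ∀ r : ℝ, Q r = 0 → r ^ 3 - e1 * r ^ 2 + (e2 - ε) * r - (e3 - e1 * ε) = 0 := by
    intro r hr
    simp only [hQ, he1, he2, he3] at hr ⊢
    linear_combination hr
  obtain ⟨hs1, hs2, hs3⟩ := vieta3 r1 r2 r3 e1 (e2 - ε) (e3 - e1 * ε) h12 h13 h23
    (HQ r1 hr1) (HQ r2 hr2) (HQ r3 hr3)
  refine ⟨r1, r2, r3, hr1a, lt_trans hy hr2a, lt_trans hm0pos hr3a, ?_, ?_, ?_⟩
  · simp only [he1] at hs1; linarith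
  · have hp3 : r1 ^ 3 + r2 ^ 3 + r3 ^ 3 =
        (r1 + r2 + r3) ^ 3 - 3 * (r1 + r2 + r3) * (r1 * r2 + r1 * r3 + r2 * r3)
          + 3 * (r1 * r2 * r3) := by ring
    rw [hp3, hs1, hs2, hs3]
    simp only [he1, he2, he3]
    ring
  · have hp4 : r1 ^ 4 + r2 ^ 4 + r3 ^ 4 =
        (r1 + r2 + r3) ^ 4 - 4 * (r1 + r2 + r3) ^ 2 * (r1 * r2 + r1 * r3 + r2 * r3)
          + 2 * (r1 * r2 + r1 * r3 + r2 * r3) ^ 2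
          + 4 * (r1 + r2 + r3) * (r1 * r2 * r3) := by ring
    have hp4' : x ^ 4 + y ^ 4 + z ^ 4 =
        e1 ^ 4 - 4 * e1 ^ 2 * e2 + 2 * e2 ^ 2 + 4 * e1 * e3 := by
      simp only [he1, he2, he3]; ring
    rw [hp4, hs1, hs2, hs3, hp4']
    have hdiff : e1 ^ 4 - 4 * e1 ^ 2 * (e2 - ε) + 2 * (e2 - ε) ^ 2 + 4 * e1 * (e3 - e1 * ε)
        - (e1 ^ 4 - 4 * e1 ^ 2 * e2 + 2 * e2 ^ 2 + 4 * e1 * e3) = 2 * ε * (ε - 2 * e2) := by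
      ring
    have hneg : 2 * ε * (ε - 2 * e2) < 0 :=
      mul_neg_of_pos_of_neg (by linarith) (by linarith)
    linarith

/-- Summation over an update of three distinct coordinates. -/
private lemma sum_update3 {m : ℕ} (w : Fin m → ℝ) (i j k : Fin m)
    (hij : i ≠ j) (hik : i ≠ k) (hjk : j ≠ k) (a b c : ℝ) (g : ℝ → ℝ) :
    ∑ l, g (Function.update (Function.update (Function.update w i a) j b) k c l)
      = ∑ l, g (w l) + (g a + g b + g c) - (g (w i) + g (w j) + g (w k)) := by
  have hjmem : j ∈ (Finset.univ : Finset (Fin m)) \ {k} := by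
    simp [hjk]
  have himem : i ∈ ((Finset.univ : Finset (Fin m)) \ {k}) \ {j} := by
    simp [hik, hij]
  have decomp : ∀ f : Fin m → ℝ,
      ∑ l, f l = ∑ l ∈ (((Finset.univ : Finset (Fin m)) \ {k}) \ {j}) \ {i}, f l
        + f i + f j + f k := by
    intro f
    rw [Finset.sum_eq_sum_sdiff_singleton_add (Finset.mem_univ k) f,
      Finset.sum_eq_sum_sdiff_singleton_add hjmem f,
      Finset.sum_eq_sum_sdiff_singleton_add himem f]
  set v := Function.update (Function.update (Function.update w i a) j b) k c with hv
  have hvi : v i = a := by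
    rw [hv, Function.update_of_ne hik, Function.update_of_ne hij, Function.update_self]
  have hvj : v j = b := by
    rw [hv, Function.update_of_ne hjk, Function.update_self]
  have hvk : v k = c := by rw [hv, Function.update_self]
  rw [decomp (fun l => g (v l)), decomp (fun l => g (w l))]
  simp only [hvi, hvj, hvk]
  have hsame : ∑ l ∈ (((Finset.univ : Finset (Fin m)) \ {k}) \ {j}) \ {i}, g (v l)
      = ∑ l ∈ (((Finset.univ : Finset (Fin m)) \ {k}) \ {j}) \ {i}, g (w l) := by
    apply Finset.sum_congr rfl
    intro l hl
    simp only [Finset.mem_sdiff, Finset.mem_singleton, Finset.mem_univ, true_and] at hl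
    obtain ⟨⟨hk', hj'⟩, hi'⟩ := hl
    rw [hv, Function.update_of_ne hk', Function.update_of_ne hj', Function.update_of_ne hi']
  rw [hsame]
  ring

/-- No minimizer can contain a "bad" triple of coordinates `w i ≤ w j < w k`. -/
private lemma no_bad (C : ℝ) (m : ℕ) (w : Fin m → ℝ)
    (hpos : ∀ i, 0 < w i) (hsum : ∑ i, w i = 1) (hcube : ∑ i, w i ^ 3 = C)
    (hmin : ∀ (k : ℕ) (v : Fin k → ℝ), (∀ i, 0 < v i) → ∑ i, v i = 1 →
      ∑ i, v i ^ 3 = C → ∑ i, w i ^ 4 ≤ ∑ i, v i ^ 4)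
    (i j k : Fin m) (hij : i ≠ j) (hik : i ≠ k) (hjk : j ≠ k)
    (hord1 : w i ≤ w j) (hord2 : w j < w k) : False := by
  obtain ⟨r1, r2, r3, h1, h2, h3, hs, hc, hq⟩ :=
    key_triple (w i) (w j) (w k) (hpos i) (hpos j) (hpos k) hord1 hord2
  set v := Function.update (Function.update (Function.update w i r1) j r2) k r3 with hv
  have hvpos : ∀ l, 0 < v l := by
    intro l
    rw [hv]
    simp only [Function.update_apply]
    split_ifs <;> first | assumption | exact hpos l
  have hsum1 : ∑ l, v l = 1 := by
    have h := sum_update3 w i j k hij hik hjk r1 r2 r3 (fun t => t)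
    simp only [← hv] at h
    simp only [h]
    linarith
  have hsum3 : ∑ l, v l ^ 3 = C := by
    have h := sum_update3 w i j k hij hik hjk r1 r2 r3 (fun t => t ^ 3)
    simp only [← hv] at h
    simp only [h]
    linarith
  have hsum4 : ∑ l, v l ^ 4 < ∑ l, w l ^ 4 := by
    have h := sum_update3 w i j k hij hik hjk r1 r2 r3 (fun t => t ^ 4)
    simp only [← hv] at h
    simp only [h]
    linarith
  have := hmin m v hvpos hsum1 hsum3
  linarith

open Classical in
/-- any minimizer of the sum of fourth powers among positive vectors
with prescribed sum `1` and sum of cubes `C ∈ (0,1)` has all coordinates equal to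
some `a`, except possibly one coordinate equal to some `b` with `a ≥ b > 0`. -/
theorem stmt_16 (C : ℝ) (hC0 : 0 < C) (hC1 : C < 1) (m : ℕ) (w : Fin m → ℝ)
    (hpos : ∀ i, 0 < w i) (hsum : ∑ i, w i = 1) (hcube : ∑ i, w i ^ 3 = C)
    (hmin : ∀ (k : ℕ) (v : Fin k → ℝ), (∀ i, 0 < v i) → ∑ i, v i = 1 →
      ∑ i, v i ^ 3 = C → ∑ i, w i ^ 4 ≤ ∑ i, v i ^ 4) :
    ∃ a b : ℝ, b ≤ a ∧ 0 < b ∧ (∀ i, w i = a ∨ w i = b) ∧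
      m - 1 ≤ (Finset.univ.filter (fun i => w i = a)).card := by
  have hm : 0 < m := by
    by_contra h
    push_neg at h
    interval_cases m
    simp at hsum
  haveI : NeZero m := ⟨Nat.pos_iff_ne_zero.mp hm⟩
  haveI : Nonempty (Fin m) := ⟨⟨0, hm⟩⟩
  obtain ⟨kM, hkM⟩ := Finite.exists_max w
  obtain ⟨km, hkm⟩ := Finite.exists_min w
  by_cases hab : w kM = w km
  · -- all coordinates equal
    refine ⟨w kM, w kM, le_refl _, hpos kM, fun i => Or.inl ?_, ?_⟩
    · exact le_antisymm (hkM i) (hab ▸ hkm i)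
    · have : (Finset.univ.filter (fun i => w i = w kM)) = Finset.univ := by
        ext i
        simp only [Finset.mem_filter, Finset.mem_univ, true_and, iff_true]
        exact le_antisymm (hkM i) (hab ▸ hkm i)
      rw [this, Finset.card_univ, Fintype.card_fin]
      omega
  · have hba : w km < w kM := lt_of_le_of_ne (hkm kM) (Ne.symm hab)
    have hkmM : km ≠ kM := by
      intro h; rw [h] at hba; exact lt_irrefl _ hba
    -- min value is attained only at km
    have huniq : ∀ i, i ≠ km → w i ≠ w km := by
      intro i hi hwi
      have hiM : i ≠ kM := by
        intro h; rw [h] at hwi; rw [hwi] at hba; exact lt_irrefl _ hba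
      exact no_bad C m w hpos hsum hcube hmin i km kM hi hiM hkmM
        (le_of_eq hwi) hba
    -- every coordinate is max or min
    have hall : ∀ i, w i = w kM ∨ w i = w km := by
      intro i
      by_contra h
      push_neg at h
      obtain ⟨hi1, hi2⟩ := h
      have h1 : w km < w i := lt_of_le_of_ne (hkm i) (fun h => hi2 h.symm)
      have h2 : w i < w kM := lt_of_le_of_ne (hkM i) hi1
      have hikm : km ≠ i := by
        intro h; rw [← h] at h1; exact lt_irrefl _ h1
      have hikM : i ≠ kM := by
        intro h; rw [h] at h2; exact lt_irrefl _ h2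
      exact no_bad C m w hpos hsum hcube hmin km i kM hikm hkmM hikM
        (le_of_lt h1) h2
    refine ⟨w kM, w km, le_of_lt hba, hpos km, hall, ?_⟩
    have hsub : Finset.univ \ {km} ⊆ Finset.univ.filter (fun i => w i = w kM) := by
      intro i hi
      simp only [Finset.mem_sdiff, Finset.mem_singleton, Finset.mem_univ, true_and] at hi
      simp only [Finset.mem_filter, Finset.mem_univ, true_and]
      rcases hall i with h | h
      · exact h
      · exact absurd h (huniq i hi)
    have hcard : (Finset.univ \ ({km} : Finset (Fin m))).card = m - 1 := by
      rw [Finset.card_sdiff_of_subset (Finset.subset_univ _), Finset.card_univ, Fintype.card_fin,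
        Finset.card_singleton]
    calc m - 1 = (Finset.univ \ ({km} : Finset (Fin m))).card := hcard.symm
      _ ≤ _ := Finset.card_le_card hsub
end
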